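/- arXiv:2104.15080 — 2 statements merged into one kernel-verified Lean document; each statement's English description precedes it below -/
import Mathlib

section
/- Every d-dimensional alcoved polytope in ℝ^d that contains the origin in its interior contains the polytope Q_d. Consequently, Q_d is the unique alcoved polytope of minimal volume among all d-dimensional alcoved polytopes containing the origin in their interior. -/
open scoped BigOperators Pointwise

/-- A point of `ℝ^d` is a *lattice point* if all its coordinates are integers. -/
def IsLatticePt {d : ℕ} (x : Fin d → ℝ) : Prop := ∀ i, ∃ n : ℤ, x i = (n : ℝ)

/-- A *polytope* in `ℝ^d` is the convex hull of a finite point set. -/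
def IsPolytope {d : ℕ} (P : Set (Fin d → ℝ)) : Prop :=
  ∃ V : Finset (Fin d → ℝ), P = convexHull ℝ (V : Set (Fin d → ℝ))

/-- A *lattice polytope* in `ℝ^d`: the convex hull of finitely many lattice points. -/
def IsLatticePolytope {d : ℕ} (P : Set (Fin d → ℝ)) : Prop :=
  ∃ V : Finset (Fin d → ℝ), (∀ v ∈ V, IsLatticePt v) ∧ P = convexHull ℝ (V : Set (Fin d → ℝ))

/-- Full-dimensional (`d`-dimensional) subset of `ℝ^d`: nonempty interior. -/
def IsFullDim {d : ℕ} (P : Set (Fin d → ℝ)) : Prop := (interior P).Nonempty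

/-- `F` is a *facet* of the (full-dimensional) polytope `P` : the intersection of `P`
with a supporting hyperplane, of affine dimension `d - 1`. -/
def IsFacet {d : ℕ} (P F : Set (Fin d → ℝ)) : Prop :=
  ∃ (a : Fin d → ℝ) (c : ℝ), a ≠ 0 ∧ (∀ x ∈ P, (∑ i, a i * x i) ≤ c) ∧
    F = {x ∈ P | (∑ i, a i * x i) = c} ∧
    Module.finrank ℝ (affineSpan ℝ F).direction = d - 1

/-- Extend `y ∈ ℝ^d` to `Fin (d+1)` by the convention `y₀ = 0`. -/
def extCoord {d : ℕ} (y : Fin d → ℝ) : Fin (d + 1) → ℝ := Fin.cons 0 y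

/-- An *alcove hyperplane* in `ℝ^d`: `{y : y_i - y_j = k}` for integer `k` and
indices `i j ∈ {0, 1, …, d}`, with the convention `y₀ = 0`. -/
def IsAlcoveHyperplane {d : ℕ} (H : Set (Fin d → ℝ)) : Prop :=
  ∃ (i j : Fin (d + 1)) (k : ℤ), i ≠ j ∧
    H = {y : Fin d → ℝ | extCoord y i - extCoord y j = (k : ℝ)}

/-- A `d`-dimensional polytope in `ℝ^d` is an *alcoved polytope* if all of its
facet-defining hyperplanes are alcove hyperplanes. -/
def IsAlcovedPolytope {d : ℕ} (P : Set (Fin d → ℝ)) : Prop :=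
  IsPolytope P ∧ IsFullDim P ∧
    ∀ F, IsFacet P F → ∃ H, IsAlcoveHyperplane H ∧ F ⊆ H

/-- The set of interior lattice points of `P`, as points of `ℤ^d`. -/
def interiorLatticePts {d : ℕ} (P : Set (Fin d → ℝ)) : Set (Fin d → ℤ) :=
  {p | (fun i => (p i : ℝ)) ∈ interior P}

/-- Lattice distance between the hyperplane `{x | a·x = b}` (with `a ∈ ℤ^d`, `b ∈ ℤ`)
and a lattice point `p`: it is `0` if `p` lies on the hyperplane and otherwise `n + 1`,
where `n` is the number of parallel translates of the hyperplane through lattice points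
strictly between `p` and the hyperplane. -/
noncomputable def latticeDistAux {d : ℕ} (a : Fin d → ℤ) (b : ℤ) (p : Fin d → ℤ) : ℕ :=
  if (∑ i, a i * p i) = b then 0
  else Nat.card {c : ℤ // (∃ q : Fin d → ℤ, (∑ i, a i * q i) = c) ∧
      min (∑ i, a i * p i) b < c ∧ c < max (∑ i, a i * p i) b} + 1

/-- Lattice distance between a rational hyperplane `H ⊆ ℝ^d` (given as a set) and a
lattice point `p`. -/
noncomputable def hyperplaneLatticeDist {d : ℕ} (H : Set (Fin d → ℝ)) (p : Fin d → ℤ) : ℕ :=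
  sInf {n : ℕ | ∃ (a : Fin d → ℤ) (b : ℤ), a ≠ 0 ∧
    H = {x : Fin d → ℝ | (∑ i, (a i : ℝ) * x i) = (b : ℝ)} ∧ n = latticeDistAux a b p}

/-- Lattice distance of a facet `F` to a set `S` of lattice points: the minimum over
`p ∈ S` of the lattice distance between `aff F` and `p`. -/
noncomputable def facetLatticeDistSet {d : ℕ} (F : Set (Fin d → ℝ)) (S : Set (Fin d → ℤ)) : ℕ :=
  sInf {n : ℕ | ∃ p ∈ S, hyperplaneLatticeDist ((affineSpan ℝ F : AffineSubspace ℝ (Fin d → ℝ)) : Set (Fin d → ℝ)) p = n}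

/-- Number of lattice points in the `t`-th dilate of `P`. -/
noncomputable def latCount {d : ℕ} (P : Set (Fin d → ℝ)) (t : ℕ) : ℕ :=
  Nat.card {p : Fin d → ℤ // (fun i => (p i : ℝ)) ∈ (t : ℝ) • P}

/-- `h` is the `h^*`-vector of the `d`-dimensional lattice polytope `P ⊆ ℝ^d`:
the (unique) coefficient vector with
`Ehr_P(z) = (h₀ + h₁ z + … + h_d z^d)/(1-z)^{d+1}`, expressed equivalently by
`L_P(t) = ∑ i, h_i * C(t + d - i, d)` for all `t ≥ 1`. -/
def IsHStarVector {d : ℕ} (P : Set (Fin d → ℝ)) (h : Fin (d + 1) → ℤ) : Prop :=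
  ∀ t : ℕ, 1 ≤ t →
    (latCount P t : ℤ) = ∑ i : Fin (d + 1), h i * (Nat.choose (t + d - (i : ℕ)) d : ℤ)

/-- A finite sequence is *unimodal* if it first weakly increases, then weakly decreases. -/
def Unimodal {n : ℕ} (s : Fin n → ℤ) : Prop :=
  ∃ k : Fin n, (∀ i j : Fin n, i ≤ j → j ≤ k → s i ≤ s j) ∧
    (∀ i j : Fin n, k ≤ i → i ≤ j → s j ≤ s i)

/-- `K` is a triangulation of the lattice polytope `P`, i.e. a triangulation of the
point configuration `P ∩ ℤ^d`: a simplicial complex with vertices among the lattice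
points of `P` covering `P`. -/
def IsTriangulationOf {d : ℕ} (K : Geometry.SimplicialComplex ℝ (Fin d → ℝ))
    (P : Set (Fin d → ℝ)) : Prop :=
  K.space = P ∧ ∀ s ∈ K.faces, ∀ x ∈ s, x ∈ P ∧ IsLatticePt x

/-- The lattice `ℤ^d` inside `ℝ^d`, as a `ℤ`-submodule. -/
def latticeSubmodule (d : ℕ) : Submodule ℤ (Fin d → ℝ) :=
  Submodule.span ℤ (Set.range fun i : Fin d => (Pi.single i 1 : Fin d → ℝ))

/-- A full-dimensional lattice simplex (given by its vertex set `s`, `|s| = d+1`) is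
*unimodular* if the differences of its vertices with one of them form a `ℤ`-basis of
`ℤ^d`, i.e. they span the lattice `ℤ^d` over `ℤ`. -/
def IsUnimodularSimplex {d : ℕ} (s : Finset (Fin d → ℝ)) : Prop :=
  s.card = d + 1 ∧ (∀ x ∈ s, IsLatticePt x) ∧
    ∃ v ∈ s, Submodule.span ℤ ((fun x => x - v) '' (s : Set (Fin d → ℝ))) = latticeSubmodule d

/-- A *unimodular triangulation* of `P`: all full-dimensional simplices are unimodular. -/
def IsUnimodularTriangulation {d : ℕ} (K : Geometry.SimplicialComplex ℝ (Fin d → ℝ))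
    (P : Set (Fin d → ℝ)) : Prop :=
  IsTriangulationOf K P ∧ ∀ s ∈ K.faces, s.card = d + 1 → IsUnimodularSimplex s

/-- The subcomplex of `K` induced on the boundary lattice points `(∂P) ∩ ℤ^d`
(i.e. all faces of `K` whose vertices lie in `∂P`) is a triangulation of `∂P`,
i.e. it covers `∂P`. -/
def BoundaryInducedIsTriangulation {d : ℕ} (K : Geometry.SimplicialComplex ℝ (Fin d → ℝ))
    (P : Set (Fin d → ℝ)) : Prop :=
  (⋃ s ∈ {s ∈ K.faces | ∀ x ∈ s, x ∈ frontier P},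
      convexHull ℝ (s : Set (Fin d → ℝ))) = frontier P

/-- `K` is a *regular* triangulation of `P`: there is a height function `w` on the
lattice points of `P` whose lower convex hull projects to `K`; equivalently every face
of `K` is the domain of equality of an affine functional lying strictly below the lift
of all other lattice points of `P`. -/
def IsRegularTriangulation {d : ℕ} (K : Geometry.SimplicialComplex ℝ (Fin d → ℝ))
    (P : Set (Fin d → ℝ)) : Prop :=
  ∃ w : (Fin d → ℝ) → ℝ, ∀ s ∈ K.faces,
    ∃ ℓ : (Fin d → ℝ) →ᵃ[ℝ] ℝ, (∀ x ∈ s, ℓ x = w x) ∧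
      ∀ x : Fin d → ℝ, IsLatticePt x → x ∈ P → x ∉ s → ℓ x < w x

/-- The union of all alcove hyperplanes in `ℝ^d`. -/
def alcoveUnion (d : ℕ) : Set (Fin d → ℝ) := {y | ∃ H, IsAlcoveHyperplane H ∧ y ∈ H}

/-- The polytope `Q_d = {y ∈ ℝ^d : y_i - y_j ≤ 1 for all 0 ≤ i, j ≤ d}` (with `y₀ = 0`),
the minimal-volume alcoved polytope with the origin in its interior. -/
def Qd (d : ℕ) : Set (Fin d → ℝ) :=
  {y | ∀ i j : Fin (d + 1), extCoord y i - extCoord y j ≤ 1}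

section Stmt11Aux

open Set Metric

variable {d : ℕ}

private lemma sum_linear (a : Fin d → ℝ) :
    IsLinearMap ℝ (fun z : Fin d → ℝ => ∑ i, a i * z i) := by
  constructor
  · intro y z
    rw [← Finset.sum_add_distrib]
    exact Finset.sum_congr rfl fun i _ => by simp [mul_add]
  · intro c y
    simp only [Pi.smul_apply, smul_eq_mul, Finset.mul_sum]
    exact Finset.sum_congr rfl fun i _ => by ring

private lemma sum_linear' (x : Fin d → ℝ) :
    IsLinearMap ℝ (fun a : Fin d → ℝ => ∑ i, a i * x i) := by
  constructor
  · intro y z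
    rw [← Finset.sum_add_distrib]
    exact Finset.sum_congr rfl fun i _ => by simp [add_mul]
  · intro c y
    simp only [Pi.smul_apply, smul_eq_mul, Finset.mul_sum]
    exact Finset.sum_congr rfl fun i _ => by ring

private lemma sum_continuous' (x : Fin d → ℝ) :
    Continuous (fun a : Fin d → ℝ => ∑ i, a i * x i) :=
  continuous_finset_sum _ fun i _ => (continuous_apply i).mul continuous_const

private lemma convexHull_le_halfspace {V : Set (Fin d → ℝ)} {a : Fin d → ℝ} {c : ℝ}
    (h : ∀ v ∈ V, ∑ i, a i * v i ≤ c) :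
    convexHull ℝ V ⊆ {z : Fin d → ℝ | ∑ i, a i * z i ≤ c} :=
  convexHull_min h (convex_halfSpace_le (sum_linear a) c)

private lemma repr_sum (f : (Fin d → ℝ) →ₗ[ℝ] ℝ) (y : Fin d → ℝ) :
    f y = ∑ i, f (Pi.single i 1) * y i := by
  have hy : y = ∑ i, y i • (Pi.single i (1:ℝ) : Fin d → ℝ) := by
    ext j
    simp [Pi.single_apply, Finset.sum_ite_eq, mul_ite]
  conv_lhs => rw [hy]
  rw [map_sum]
  exact Finset.sum_congr rfl fun i _ => by rw [map_smul]; simp [mul_comm]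

private def polarV (V : Finset (Fin d → ℝ)) : Set (Fin d → ℝ) :=
  {b | ∀ v ∈ V, ∑ i, b i * v i ≤ 1}

private lemma span_active_of_extreme (hd : 1 ≤ d) (V : Finset (Fin d → ℝ)) {a : Fin d → ℝ}
    (ha : a ∈ Set.extremePoints ℝ (polarV V)) :
    Submodule.span ℝ {v : Fin d → ℝ | v ∈ V ∧ ∑ i, a i * v i = 1} = ⊤ := by
  classical
  by_contra hne
  set T : Set (Fin d → ℝ) := {v : Fin d → ℝ | v ∈ V ∧ ∑ i, a i * v i = 1} with hT
  obtain ⟨f, hf0, hfbot⟩ := Submodule.exists_dual_map_eq_bot_of_lt_top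
    (p := Submodule.span ℝ T) (lt_top_iff_ne_top.2 hne) inferInstance
  have hfT : ∀ v ∈ T, f v = 0 := by
    intro v hv
    have : f v ∈ (Submodule.span ℝ T).map f :=
      Submodule.mem_map_of_mem (Submodule.subset_span hv)
    rw [hfbot] at this
    simpa using this
  set b : Fin d → ℝ := fun i => f (Pi.single i 1) with hb
  have hrep : ∀ y, (∑ i, b i * y i) = f y := fun y => (repr_sum f y).symm
  have hbne : b ≠ 0 := by
    intro h
    apply hf0
    refine LinearMap.ext fun y => ?_
    have h1 := hrep y
    rw [h] at h1
    simpa using h1.symm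
  set S : Finset (Fin d → ℝ) := V.filter (fun v => ¬ (∑ i, a i * v i = 1)) with hS
  have hSlt : ∀ v ∈ S, ∑ i, a i * v i < 1 := by
    intro v hv
    rw [hS, Finset.mem_filter] at hv
    exact lt_of_le_of_ne (ha.1 v hv.1) hv.2
  obtain ⟨ε, hε, hkey⟩ : ∃ ε : ℝ, 0 < ε ∧
      ∀ v ∈ S, ε * |∑ i, b i * v i| < 1 - ∑ i, a i * v i := by
    by_cases hSne : S.Nonempty
    · refine ⟨S.inf' hSne (fun v => (1 - ∑ i, a i * v i) / (|∑ i, b i * v i| + 1)), ?_, ?_⟩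
      · rw [Finset.lt_inf'_iff]
        intro v hv
        have h1 := hSlt v hv
        have h2 : (0:ℝ) < |∑ i, b i * v i| + 1 := by positivity
        exact div_pos (by linarith) h2
      · intro v hv
        have h1 : S.inf' hSne (fun v => (1 - ∑ i, a i * v i) / (|∑ i, b i * v i| + 1))
            ≤ (1 - ∑ i, a i * v i) / (|∑ i, b i * v i| + 1) := Finset.inf'_le _ hv
        have h2 := hSlt v hv
        have h3 : (0:ℝ) ≤ |∑ i, b i * v i| := abs_nonneg _
        have h4 : (0:ℝ) < |∑ i, b i * v i| + 1 := by positivity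
        have h5 : ((1 - ∑ i, a i * v i) / (|∑ i, b i * v i| + 1)) * (|∑ i, b i * v i| + 1)
            = 1 - ∑ i, a i * v i := div_mul_cancel₀ _ (ne_of_gt h4)
        have h6 : (0:ℝ) < (1 - ∑ i, a i * v i) / (|∑ i, b i * v i| + 1) :=
          div_pos (by linarith) h4
        nlinarith [mul_le_mul_of_nonneg_right h1 h3]
    · exact ⟨1, one_pos, fun v hv => absurd ⟨v, hv⟩ hSne⟩
  have hmem : ∀ s : ℝ, |s| ≤ ε → a + s • b ∈ polarV V := by
    intro s hs v hv
    have expand : ∑ i, (a + s • b) i * v i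
        = (∑ i, a i * v i) + s * ∑ i, b i * v i := by
      rw [Finset.mul_sum, ← Finset.sum_add_distrib]
      exact Finset.sum_congr rfl fun i _ => by
        simp only [Pi.add_apply, Pi.smul_apply, smul_eq_mul]; ring
    rw [expand]
    by_cases hvT : ∑ i, a i * v i = 1
    · have hz : (∑ i, b i * v i) = 0 := by
        rw [hrep]; exact hfT v ⟨hv, hvT⟩
      simp [hz, hvT]
    · have hvS : v ∈ S := by rw [hS, Finset.mem_filter]; exact ⟨hv, hvT⟩
      have h1 := hkey v hvS
      have h2 : s * (∑ i, b i * v i) ≤ ε * |∑ i, b i * v i| := by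
        calc s * (∑ i, b i * v i) ≤ |s * (∑ i, b i * v i)| := le_abs_self _
          _ = |s| * |∑ i, b i * v i| := abs_mul _ _
          _ ≤ ε * |∑ i, b i * v i| := mul_le_mul_of_nonneg_right hs (abs_nonneg _)
      linarith
  have h1 : a + ε • b ∈ polarV V := hmem ε (by rw [abs_of_pos hε])
  have h2 : a - ε • b ∈ polarV V := by
    have := hmem (-ε) (by rw [abs_neg, abs_of_pos hε])
    rwa [neg_smul, ← sub_eq_add_neg] at this
  have hseg : a ∈ openSegment ℝ (a - ε • b) (a + ε • b) := by
    refine ⟨1/2, 1/2, by norm_num, by norm_num, by norm_num, ?_⟩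
    ext i
    simp only [Pi.add_apply, Pi.smul_apply, Pi.sub_apply, smul_eq_mul]
    ring
  obtain ⟨hL, _⟩ := (mem_extremePoints.1 ha).2 _ h2 _ h1 hseg
  apply hbne
  have hz : ε • b = 0 := by
    have h' : a = a + ε • b := sub_eq_iff_eq_add.1 hL
    have h'' := congrArg (fun w => w - a) h'
    simpa using h''.symm
  rcases smul_eq_zero.1 hz with h | h
  · exact absurd h (ne_of_gt hε)
  · exact h

private lemma polar_compact (V : Finset (Fin d → ℝ)) {P : Set (Fin d → ℝ)}
    (hPV : P = convexHull ℝ (V : Set (Fin d → ℝ)))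
    (h0 : (0 : Fin d → ℝ) ∈ interior P) : IsCompact (polarV V) := by
  obtain ⟨ε, hε, hball⟩ := Metric.mem_nhds_iff.1 (mem_interior_iff_mem_nhds.1 h0)
  have hhalf : ∀ a ∈ polarV V, ∀ z ∈ P, ∑ i, a i * z i ≤ 1 := by
    intro a haP z hz
    exact convexHull_le_halfspace (fun v hv => haP v hv) (hPV ▸ hz)
  have hbound : ∀ a ∈ polarV V, ∀ i, |a i| ≤ 2/ε := by
    intro a haP i
    have key : ∀ t : ℝ, |t| < ε → a i * t ≤ 1 := by
      intro t ht
      have hsingle : (Pi.single i t : Fin d → ℝ) ∈ P := by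
        apply hball
        rw [mem_ball_zero_iff]
        refine lt_of_le_of_lt ?_ ht
        refine (pi_norm_le_iff_of_nonneg (abs_nonneg t)).2 fun j => ?_
        rcases eq_or_ne j i with rfl | hji
        · simp [Real.norm_eq_abs]
        · simp [Pi.single_eq_of_ne hji, abs_nonneg]
      have := hhalf a haP _ hsingle
      have hsum : ∑ j, a j * (Pi.single i t : Fin d → ℝ) j = a i * t := by
        rw [Finset.sum_eq_single i]
        · simp
        · intro j _ hji; simp [Pi.single_eq_of_ne hji]
        · intro h; exact absurd (Finset.mem_univ i) h
      rwa [hsum] at this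
    have hε2 : |ε/2| < ε := by rw [abs_of_pos (by linarith)]; linarith
    have hε2' : |-(ε/2)| < ε := by rw [abs_neg, abs_of_pos (by linarith)]; linarith
    have k1 := key (ε/2) hε2
    have k2 := key (-(ε/2)) hε2'
    rw [le_div_iff₀ hε]
    rcases le_or_gt 0 (a i) with h | h
    · rw [abs_of_nonneg h]; nlinarith
    · rw [abs_of_neg h]; nlinarith
  have hsub : polarV V ⊆ closedBall 0 (2/ε) := by
    intro a haP
    rw [mem_closedBall_zero_iff]
    refine (pi_norm_le_iff_of_nonneg (by positivity)).2 fun i => ?_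
    simpa [Real.norm_eq_abs] using hbound a haP i
  have hclosed : IsClosed (polarV V) := by
    have : polarV V = ⋂ v ∈ V, {b : Fin d → ℝ | ∑ i, b i * v i ≤ 1} := by
      ext b; simp [polarV]
    rw [this]
    exact isClosed_biInter fun v _ => isClosed_le (sum_continuous' v) continuous_const
  exact (isCompact_closedBall _ _).of_isClosed_subset hclosed hsub

private lemma exists_extreme_gt (V : Finset (Fin d → ℝ)) {P : Set (Fin d → ℝ)}
    (hPV : P = convexHull ℝ (V : Set (Fin d → ℝ)))
    (h0 : (0 : Fin d → ℝ) ∈ interior P) {x : Fin d → ℝ} (hx : x ∉ P) :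
    ∃ a ∈ Set.extremePoints ℝ (polarV V), 1 < ∑ i, a i * x i := by
  have hPc : Convex ℝ P := hPV ▸ convex_convexHull ℝ _
  have hPcl : IsClosed P := hPV ▸ V.finite_toSet.isClosed_convexHull ℝ
  obtain ⟨f, u, hfP, hfx⟩ := geometric_hahn_banach_closed_point hPc hPcl hx
  have h0P : (0 : Fin d → ℝ) ∈ P := interior_subset h0
  have hu : 0 < u := by simpa using hfP 0 h0P
  set a₀ : Fin d → ℝ := fun i => f (Pi.single i 1) / u with ha₀
  have hrep : ∀ y, (∑ i, a₀ i * y i) = f y / u := by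
    intro y
    have := repr_sum (f : (Fin d → ℝ) →ₗ[ℝ] ℝ) y
    simp only [ContinuousLinearMap.coe_coe] at this
    rw [this, Finset.sum_div]
    exact Finset.sum_congr rfl fun i _ => by rw [ha₀]; ring
  have ha₀Pol : a₀ ∈ polarV V := by
    intro v hv
    rw [hrep]
    exact (div_le_one hu).2 (le_of_lt (hfP v (hPV ▸ subset_convexHull ℝ _ hv)))
  have ha₀x : 1 < ∑ i, a₀ i * x i := by
    rw [hrep]
    exact (one_lt_div hu).2 hfx
  by_contra hcon
  push_neg at hcon
  have hPolConv : Convex ℝ (polarV V) := by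
    intro b1 h1 b2 h2 s t hs ht hst v hv
    have e : ∑ i, (s • b1 + t • b2) i * v i
        = s * (∑ i, b1 i * v i) + t * (∑ i, b2 i * v i) := by
      rw [Finset.mul_sum, Finset.mul_sum, ← Finset.sum_add_distrib]
      exact Finset.sum_congr rfl fun i _ => by
        simp only [Pi.add_apply, Pi.smul_apply, smul_eq_mul]; ring
    have hb1 := h1 v hv
    have hb2 := h2 v hv
    show ∑ i, (s • b1 + t • b2) i * v i ≤ 1
    rw [e]; nlinarith
  have hKM := closure_convexHull_extremePoints (polar_compact V hPV h0) hPolConv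
  have hhalf : polarV V ⊆ {b : Fin d → ℝ | ∑ i, b i * x i ≤ 1} := by
    rw [← hKM]
    refine closure_minimal (convexHull_min (fun b hb => hcon b hb) ?_) ?_
    · exact convex_halfSpace_le (sum_linear' x) 1
    · exact isClosed_le (sum_continuous' x) continuous_const
  exact absurd (hhalf ha₀Pol) (not_le.2 ha₀x)

private lemma isFacet_of_span (hd : 1 ≤ d) {P : Set (Fin d → ℝ)} {a : Fin d → ℝ}
    {T : Set (Fin d → ℝ)} (hTP : T ⊆ P) (hT1 : ∀ v ∈ T, ∑ i, a i * v i = 1)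
    (hspan : Submodule.span ℝ T = ⊤) (hle : ∀ z ∈ P, ∑ i, a i * z i ≤ 1) :
    IsFacet P {z ∈ P | ∑ i, a i * z i = 1} := by
  set La : (Fin d → ℝ) →ₗ[ℝ] ℝ := IsLinearMap.mk' _ (sum_linear a) with hLa
  have hLa_apply : ∀ y, La y = ∑ i, a i * y i := fun y => rfl
  have hTne : T.Nonempty := by
    by_contra h
    rw [Set.not_nonempty_iff_eq_empty] at h
    rw [h, Submodule.span_empty] at hspan
    have h1 : Module.finrank ℝ (⊥ : Submodule ℝ (Fin d → ℝ))
        = Module.finrank ℝ (⊤ : Submodule ℝ (Fin d → ℝ)) := by rw [hspan]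
    rw [finrank_bot, finrank_top, Module.finrank_fin_fun] at h1
    omega
  obtain ⟨v₀, hv₀⟩ := hTne
  have hane : a ≠ 0 := by
    intro h
    have := hT1 v₀ hv₀
    rw [h] at this
    simp at this
  refine ⟨a, 1, hane, hle, rfl, ?_⟩
  set F : Set (Fin d → ℝ) := {z ∈ P | ∑ i, a i * z i = 1} with hF
  have hv₀F : v₀ ∈ F := ⟨hTP hv₀, hT1 v₀ hv₀⟩
  -- upper bound
  have hFsub : F ⊆ (AffineSubspace.mk' v₀ (LinearMap.ker La) :
      AffineSubspace ℝ (Fin d → ℝ)) := by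
    intro z hz
    rw [SetLike.mem_coe, AffineSubspace.mem_mk', LinearMap.mem_ker]
    have h1 : La z = 1 := hz.2
    have h2 : La v₀ = 1 := hT1 v₀ hv₀
    have : La (z - v₀) = 0 := by rw [map_sub, h1, h2]; ring
    simpa [vsub_eq_sub] using this
  have hWle : (affineSpan ℝ F).direction ≤ LinearMap.ker La := by
    have hsp : affineSpan ℝ F ≤ AffineSubspace.mk' v₀ (LinearMap.ker La) :=
      affineSpan_le.2 hFsub
    calc (affineSpan ℝ F).direction
        ≤ (AffineSubspace.mk' v₀ (LinearMap.ker La)).direction :=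
          AffineSubspace.direction_le hsp
      _ = LinearMap.ker La := AffineSubspace.direction_mk' _ _
  have hker : Module.finrank ℝ (LinearMap.ker La) = d - 1 := by
    have hrange : LinearMap.range La = ⊤ := by
      rw [LinearMap.range_eq_top]
      intro c
      refine ⟨c • v₀, ?_⟩
      rw [map_smul]
      have h2 : La v₀ = 1 := hT1 v₀ hv₀
      rw [h2]; simp
    have hrn := LinearMap.finrank_range_add_finrank_ker La
    rw [hrange, finrank_top, Module.finrank_self, Module.finrank_fin_fun] at hrn
    omega
  -- lower bound
  set D := Submodule.span ℝ ((fun w => w - v₀) '' T) with hD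
  have hDle : D ≤ (affineSpan ℝ F).direction := by
    rw [hD, Submodule.span_le]
    rintro _ ⟨w, hw, rfl⟩
    have h1 : w ∈ affineSpan ℝ F := subset_affineSpan ℝ F ⟨hTP hw, hT1 w hw⟩
    have h2 : v₀ ∈ affineSpan ℝ F := subset_affineSpan ℝ F hv₀F
    simpa [vsub_eq_sub] using AffineSubspace.vsub_mem_direction h1 h2
  have hTle : Submodule.span ℝ T ≤ D ⊔ Submodule.span ℝ {v₀} := by
    rw [Submodule.span_le]
    intro v hv
    rw [SetLike.mem_coe]
    have hmem : (v - v₀) + v₀ ∈ D ⊔ Submodule.span ℝ {v₀} :=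
      Submodule.add_mem _
        (Submodule.mem_sup_left (Submodule.subset_span ⟨v, hv, rfl⟩))
        (Submodule.mem_sup_right (Submodule.subset_span rfl))
    simpa using hmem
  have hsing : Module.finrank ℝ (Submodule.span ℝ ({v₀} : Set (Fin d → ℝ))) ≤ 1 := by
    rcases eq_or_ne v₀ 0 with rfl | hv0
    · rw [Submodule.span_zero_singleton]
      simp [finrank_bot]
    · rw [show Submodule.span ℝ ({v₀} : Set (Fin d → ℝ)) = ℝ ∙ v₀ from rfl,
        finrank_span_singleton hv0]
  have hdlow : d ≤ Module.finrank ℝ D + 1 := by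
    have h1 : Module.finrank ℝ (Submodule.span ℝ T) = d := by
      rw [hspan, finrank_top, Module.finrank_fin_fun]
    have h2 := Submodule.finrank_mono hTle
    have h3 := Submodule.finrank_add_le_finrank_add_finrank D (Submodule.span ℝ {v₀})
    omega
  have hWD := Submodule.finrank_mono hDle
  have hWK := Submodule.finrank_mono hWle
  rw [hker] at hWK
  omega

private lemma extCoord_add (y z : Fin d → ℝ) (i : Fin (d+1)) :
    extCoord (y + z) i = extCoord y i + extCoord z i := by
  rcases Fin.eq_zero_or_eq_succ i with rfl | ⟨i', rfl⟩ <;> simp [extCoord]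

private lemma extCoord_smul (c : ℝ) (y : Fin d → ℝ) (i : Fin (d+1)) :
    extCoord (c • y) i = c * extCoord y i := by
  rcases Fin.eq_zero_or_eq_succ i with rfl | ⟨i', rfl⟩ <;> simp [extCoord]

private lemma abs_extCoord_le (y : Fin d → ℝ) (i : Fin (d+1)) :
    |extCoord y i| ≤ ‖y‖ := by
  rcases Fin.eq_zero_or_eq_succ i with rfl | ⟨i', rfl⟩
  · simpa [extCoord] using norm_nonneg y
  · simpa [extCoord, Real.norm_eq_abs] using norm_le_pi_norm y i'

private lemma exists_extCoord_one {i j : Fin (d+1)} (hij : i ≠ j) :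
    ∃ y : Fin d → ℝ, extCoord y i - extCoord y j = 1 := by
  rcases Fin.eq_zero_or_eq_succ i with rfl | ⟨i', rfl⟩
  · obtain ⟨j', rfl⟩ := Fin.eq_succ_of_ne_zero (Ne.symm hij)
    refine ⟨Pi.single j' (-1), ?_⟩
    simp [extCoord]
  · refine ⟨Pi.single i' 1, ?_⟩
    rcases Fin.eq_zero_or_eq_succ j with rfl | ⟨j', rfl⟩
    · simp [extCoord]
    · have hne : j' ≠ i' := by
        rintro rfl
        exact hij rfl
      simp [extCoord, Pi.single_eq_of_ne hne]

private lemma Qd_subset_aux (hd : 1 ≤ d) {P : Set (Fin d → ℝ)} (hP : IsAlcovedPolytope P)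
    (h0 : (0 : Fin d → ℝ) ∈ interior P) : Qd d ⊆ P := by
  obtain ⟨⟨V, hPV⟩, _hfull, hfacets⟩ := hP
  intro x hxQ
  by_contra hx
  obtain ⟨a, haE, hax⟩ := exists_extreme_gt V hPV h0 hx
  have hales : ∀ z ∈ P, ∑ i, a i * z i ≤ 1 := by
    intro z hz
    exact convexHull_le_halfspace (fun v hv => haE.1 v hv) (hPV ▸ hz)
  set T : Set (Fin d → ℝ) := {v : Fin d → ℝ | v ∈ V ∧ ∑ i, a i * v i = 1} with hT
  have hspan : Submodule.span ℝ T = ⊤ := span_active_of_extreme hd V haE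
  have hTP : T ⊆ P := fun v hv => hPV ▸ subset_convexHull ℝ _ hv.1
  have hfacet := isFacet_of_span hd hTP (fun v hv => hv.2) hspan hales
  obtain ⟨H, ⟨i, j, k, hij, hH⟩, hFH⟩ := hfacets _ hfacet
  have hTH : ∀ v ∈ T, extCoord v i - extCoord v j = (k : ℝ) := by
    intro v hv
    have hmem : v ∈ H := hFH ⟨hTP hv, hv.2⟩
    rw [hH] at hmem
    exact hmem
  set g : (Fin d → ℝ) → ℝ :=
    fun y => extCoord y i - extCoord y j - (k : ℝ) * ∑ m, a m * y m with hg
  have hglin : IsLinearMap ℝ g := by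
    constructor
    · intro y z
      simp only [hg]
      rw [extCoord_add, extCoord_add, (sum_linear a).map_add]
      ring
    · intro c y
      simp only [hg, smul_eq_mul]
      rw [extCoord_smul, extCoord_smul, (sum_linear a).map_smul]
      simp only [smul_eq_mul]
      ring
  set G : (Fin d → ℝ) →ₗ[ℝ] ℝ := IsLinearMap.mk' g hglin with hG
  have hGzero : ∀ y, G y = 0 := by
    have hle : Submodule.span ℝ T ≤ LinearMap.ker G := by
      rw [Submodule.span_le]
      intro v hv
      rw [SetLike.mem_coe, LinearMap.mem_ker]
      show g v = 0
      have h1 := hTH v hv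
      have h2 := hv.2
      simp only [hg]
      rw [h1, h2]
      ring
    rw [hspan] at hle
    intro y
    exact LinearMap.mem_ker.1 (hle Submodule.mem_top)
  have hid : ∀ y : Fin d → ℝ,
      extCoord y i - extCoord y j = (k : ℝ) * ∑ m, a m * y m := by
    intro y
    have := hGzero y
    rw [show G y = g y from rfl] at this
    simp only [hg] at this
    linarith
  obtain ⟨y₀, hy₀⟩ := exists_extCoord_one hij
  have hk0 : k ≠ 0 := by
    intro h
    rw [hid y₀, h] at hy₀
    simp at hy₀
  have hk1 : (1 : ℝ) ≤ |(k : ℝ)| := by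
    have := Int.one_le_abs hk0
    calc (1:ℝ) = ((1:ℤ) : ℝ) := by norm_num
      _ ≤ ((|k| : ℤ) : ℝ) := by exact_mod_cast this
      _ = |(k : ℝ)| := by push_cast; ring
  have h1 := hxQ i j
  have h2 := hxQ j i
  have h3 : |(k : ℝ) * ∑ m, a m * x m| ≤ 1 := by
    rw [← hid x, abs_le]
    constructor <;> linarith
  have h4 : 1 < |(k : ℝ) * ∑ m, a m * x m| := by
    rw [abs_mul]
    have h5 : (∑ m, a m * x m) ≤ |∑ m, a m * x m| := le_abs_self _
    nlinarith
  linarith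

end Stmt11Aux


/-- Every `d`-dimensional alcoved polytope containing the origin in its
interior contains `Q_d`; consequently `Q_d` is the unique alcoved polytope of minimal
volume among all `d`-dimensional alcoved polytopes with the origin in their interior. -/
theorem stmt11 (d : ℕ) (hd : 1 ≤ d) (P : Set (Fin d → ℝ)) (hP : IsAlcovedPolytope P)
    (h0 : (0 : Fin d → ℝ) ∈ interior P) :
    Qd d ⊆ P ∧
    MeasureTheory.volume (Qd d) ≤ MeasureTheory.volume P ∧
    (MeasureTheory.volume P = MeasureTheory.volume (Qd d) → P = Qd d) := by
  have hsub : Qd d ⊆ P := Qd_subset_aux hd hP h0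
  have hQdball : Metric.ball (0 : Fin d → ℝ) (1/2) ⊆ Qd d := by
    intro y hy i j
    have h1 := abs_le.1 (abs_extCoord_le y i)
    have h2 := abs_le.1 (abs_extCoord_le y j)
    have h3 : ‖y‖ < 1/2 := by rwa [mem_ball_zero_iff] at hy
    linarith [h1.2, h2.1]
  have hQdbd : Qd d ⊆ Metric.closedBall (0 : Fin d → ℝ) 1 := by
    intro y hy
    rw [Metric.mem_closedBall, dist_zero_right]
    refine (pi_norm_le_iff_of_nonneg (by norm_num)).2 fun i => ?_
    have h1 := hy i.succ 0
    have h2 := hy 0 i.succ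
    simp only [extCoord, Fin.cons_succ, Fin.cons_zero] at h1 h2
    rw [Real.norm_eq_abs, abs_le]
    constructor <;> linarith
  have hQdfin : MeasureTheory.volume (Qd d) ≠ ⊤ :=
    ne_of_lt (lt_of_le_of_lt (MeasureTheory.measure_mono hQdbd)
      MeasureTheory.measure_closedBall_lt_top)
  refine ⟨hsub, MeasureTheory.measure_mono hsub, ?_⟩
  intro hvol
  refine Set.Subset.antisymm ?_ hsub
  by_contra hns
  obtain ⟨x, hxP, hxQ⟩ := Set.not_subset.1 hns
  have hxQ' : ∃ i j : Fin (d+1), 1 < extCoord x i - extCoord x j := by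
    by_contra hcon
    push_neg at hcon
    exact hxQ fun i j => hcon i j
  obtain ⟨i, j, hgt⟩ := hxQ'
  set c : ℝ := extCoord x i - extCoord x j with hc
  set t : ℝ := 2 / (c + 1) with ht
  have hc1 : 1 < c := hgt
  have ht0 : 0 < t := by rw [ht]; positivity
  have ht1 : t < 1 := by
    rw [ht, div_lt_one (by linarith)]
    linarith
  obtain ⟨⟨V, hPV⟩, -, -⟩ := hP
  have hPconv : Convex ℝ P := hPV ▸ convex_convexHull ℝ _
  set r : ℝ := (1 - t)/2 with hr
  have hr0 : 0 < r := by rw [hr]; linarith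
  have hballP : Metric.ball (t • x) r ⊆ P := by
    intro w hw
    have hwn : ‖w - t • x‖ < r := by rwa [Metric.mem_ball, dist_eq_norm] at hw
    have hz : (1 - t)⁻¹ • (w - t • x) ∈ Qd d := by
      apply hQdball
      rw [mem_ball_zero_iff, norm_smul, Real.norm_eq_abs,
        abs_of_pos (inv_pos.2 (by linarith : (0:ℝ) < 1 - t)), inv_mul_eq_div,
        div_lt_iff₀ (by linarith : (0:ℝ) < 1 - t)]
      rw [hr] at hwn
      linarith
    have hzP : (1 - t)⁻¹ • (w - t • x) ∈ P := hsub hz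
    have hw' : w = t • x + (1 - t) • ((1 - t)⁻¹ • (w - t • x)) := by
      rw [smul_smul, mul_inv_cancel₀ (by linarith : (1:ℝ) - t ≠ 0), one_smul]
      abel
    rw [hw']
    exact hPconv hxP hzP (le_of_lt ht0) (by linarith) (by ring)
  have hdisj : Disjoint (Qd d) (Metric.ball (t • x) r) := by
    rw [Set.disjoint_left]
    intro w hwQ hwB
    have hwn : ‖w - t • x‖ < r := by rwa [Metric.mem_ball, dist_eq_norm] at hwB
    have e1 : extCoord w i - extCoord w j
        = t * c + (extCoord (w - t • x) i - extCoord (w - t • x) j) := by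
      have hw' : w = t • x + (w - t • x) := by abel
      calc extCoord w i - extCoord w j
          = extCoord (t • x + (w - t • x)) i - extCoord (t • x + (w - t • x)) j := by
            rw [← hw']
        _ = t * c + (extCoord (w - t • x) i - extCoord (w - t • x) j) := by
            rw [extCoord_add, extCoord_add, extCoord_smul, extCoord_smul, hc]
            ring
    have habs1 := abs_le.1 (abs_extCoord_le (w - t • x) i)
    have habs2 := abs_le.1 (abs_extCoord_le (w - t • x) j)
    have htc : t * c + t = 2 := by
      rw [ht]
      field_simp
    have hkey : 1 < extCoord w i - extCoord w j := by
      rw [e1, hr] at *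
      linarith [habs1.1, habs2.2]
    exact absurd (hwQ i j) (not_le.2 hkey)
  have hlt : MeasureTheory.volume (Qd d) < MeasureTheory.volume P := by
    calc MeasureTheory.volume (Qd d)
        < MeasureTheory.volume (Qd d) + MeasureTheory.volume (Metric.ball (t • x) r) :=
          ENNReal.lt_add_right hQdfin
            (ne_of_gt (Metric.measure_ball_pos _ _ hr0))
      _ = MeasureTheory.volume (Qd d ∪ Metric.ball (t • x) r) :=
          (MeasureTheory.measure_union hdisj measurableSet_ball).symm
      _ ≤ MeasureTheory.volume P :=
          MeasureTheory.measure_mono (Set.union_subset hsub hballP)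
  exact absurd hvol.symm (ne_of_lt hlt)
end

section
/- Let P be a d-dimensional alcoved polytope in ℝ^d with at least one interior lattice point, let F be a facet of P, and let P' be the alcoved polyhedron obtained by removing the facet-defining half-space of F from the irredundant half-space description of P. If P' is unbounded, then F has lattice distance 1 to the set of interior lattice points of P. -/
open scoped BigOperators Pointwise

/-- The polyhedron obtained from `P` by removing the facet-defining half-space of the
facet `F` from the (irredundant) half-space description of `P`: the intersection of the
facet-defining half-spaces of all facets of `P` other than `F`. -/
def removeFacetHalfspace {d : ℕ} (P F : Set (Fin d → ℝ)) : Set (Fin d → ℝ) :=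
  {x | ∀ (a : Fin d → ℝ) (c : ℝ), a ≠ 0 → (∀ y ∈ P, (∑ i, a i * y i) ≤ c) →
    IsFacet P {y ∈ P | (∑ i, a i * y i) = c} →
    {y ∈ P | (∑ i, a i * y i) = c} ≠ F →
    (∑ i, a i * x i) ≤ c}


open Bornology

namespace Stmt13

variable {d : ℕ}

/-- dot product functional -/
def rdot {d : ℕ} (a x : Fin d → ℝ) : ℝ := ∑ i, a i * x i

lemma rdot_add (a x y : Fin d → ℝ) : rdot a (x + y) = rdot a x + rdot a y := by
  simp [rdot, mul_add, Finset.sum_add_distrib]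

lemma rdot_smul (a : Fin d → ℝ) (t : ℝ) (x : Fin d → ℝ) : rdot a (t • x) = t * rdot a x := by
  simp [rdot, Finset.mul_sum, mul_comm, mul_assoc, mul_left_comm]

lemma rdot_sub (a x y : Fin d → ℝ) : rdot a (x - y) = rdot a x - rdot a y := by
  simp [rdot, mul_sub, Finset.sum_sub_distrib]

lemma rdot_neg_left (a x : Fin d → ℝ) : rdot (-a) x = - rdot a x := by
  simp [rdot]

lemma rdot_smul_left (t : ℝ) (a x : Fin d → ℝ) : rdot (t • a) x = t * rdot a x := by
  simp [rdot, Finset.mul_sum, mul_comm, mul_assoc, mul_left_comm]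

/-- rdot as a linear map in the second variable -/
def rdotL (a : Fin d → ℝ) : (Fin d → ℝ) →ₗ[ℝ] ℝ where
  toFun := rdot a
  map_add' := rdot_add a
  map_smul' := fun t x => rdot_smul a t x

@[simp] lemma rdotL_apply (a x : Fin d → ℝ) : rdotL a x = rdot a x := rfl

lemma continuous_rdot (a : Fin d → ℝ) : Continuous (rdot a) := by
  unfold rdot; exact continuous_finset_sum _ (fun i _ => (continuous_const.mul (continuous_apply i)))

lemma continuous_rdot2 : Continuous (fun p : (Fin d → ℝ) × (Fin d → ℝ) => rdot p.1 p.2) := by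
  unfold rdot
  exact continuous_finset_sum _ (fun i _ =>
    ((continuous_apply i).comp continuous_fst).mul ((continuous_apply i).comp continuous_snd))

lemma rdot_single (a : Fin d → ℝ) (i : Fin d) (t : ℝ) : rdot a (Pi.single i t) = a i * t := by
  unfold rdot
  rw [Finset.sum_eq_single i]
  · simp
  · intro j _ hj; simp [Pi.single_apply, hj.symm]
  · simp

/-- every linear functional is an rdot -/
lemma exists_rdot_eq (f : (Fin d → ℝ) →ₗ[ℝ] ℝ) : ∀ x, f x = rdot (fun i => f (Pi.single i 1)) x := by
  intro x
  have hx : x = ∑ i, x i • (Pi.single i 1 : Fin d → ℝ) := by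
    have := pi_eq_sum_univ x
    convert this using 2 with i
    funext j; simp [Pi.single_apply, eq_comm]
  conv_lhs => rw [hx]
  rw [map_sum]
  unfold rdot
  congr 1; ext i; simp [mul_comm]

lemma rdot_eq_zero_of_forall {a : Fin d → ℝ} (h : ∀ x, rdot a x = 0) : a = 0 := by
  funext i
  have := h (Pi.single i 1)
  rw [rdot_single] at this
  simpa using this

/-- a nonzero functional has kernel of finrank d - 1 -/
lemma finrank_ker_rdot {a : Fin d → ℝ} (ha : a ≠ 0) :
    Module.finrank ℝ (LinearMap.ker (rdotL a)) = d - 1 := by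
  obtain ⟨i, hi⟩ : ∃ i, a i ≠ 0 := by
    by_contra h
    push_neg at h
    exact ha (funext h)
  have hx : rdot a (Pi.single i 1) ≠ 0 := by rw [rdot_single]; simpa using hi
  have hr : Module.finrank ℝ (LinearMap.range (rdotL a)) = 1 := by
    have : LinearMap.range (rdotL a) = ⊤ := by
      ext c
      simp only [LinearMap.mem_range, Submodule.mem_top, iff_true]
      refine ⟨(c / rdot a (Pi.single i 1)) • (Pi.single i 1 : Fin d → ℝ), ?_⟩
      rw [rdotL_apply, rdot_smul, div_mul_cancel₀ _ hx]
    rw [this]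
    simp
  have := LinearMap.finrank_range_add_finrank_ker (rdotL a)
  rw [hr] at this
  have hd : Module.finrank ℝ (Fin d → ℝ) = d := by simp
  omega

end Stmt13

namespace Stmt13

variable {d : ℕ}

lemma rdot_isLinear (a : Fin d → ℝ) : IsLinearMap ℝ (rdot a) :=
  ⟨rdot_add a, fun t x => rdot_smul a t x⟩

lemma rdot_le_on_hull {V : Finset (Fin d → ℝ)} {a : Fin d → ℝ} {c : ℝ}
    (h : ∀ v ∈ V, rdot a v ≤ c) :
    ∀ x ∈ convexHull ℝ (V : Set (Fin d → ℝ)), rdot a x ≤ c := by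
  intro x hx
  exact convexHull_min h (convex_halfSpace_le (rdot_isLinear a) c) hx

/-- exposed face of a hull is the hull of the vertices on the hyperplane -/
lemma face_subset_hull_filter {V : Finset (Fin d → ℝ)} {a : Fin d → ℝ} {c : ℝ}
    (hval : ∀ v ∈ V, rdot a v ≤ c) {x : Fin d → ℝ}
    (hx : x ∈ convexHull ℝ (V : Set (Fin d → ℝ))) (hxc : rdot a x = c) :
    x ∈ convexHull ℝ ((V.filter (fun v => rdot a v = c)) : Set (Fin d → ℝ)) := by
  classical
  rw [Finset.convexHull_eq] at hx
  obtain ⟨w, hw0, hw1, hwx⟩ := hx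
  rw [Finset.centerMass_eq_of_sum_1 _ _ hw1] at hwx
  -- each v with w v > 0 must satisfy rdot a v = c
  have key : ∀ v ∈ V, w v * (c - rdot a v) = 0 := by
    have hsum : ∑ v ∈ V, w v * (c - rdot a v) = 0 := by
      have h1 : rdot a x = ∑ v ∈ V, w v * rdot a v := by
        rw [← hwx]
        simp only [id_eq]
        rw [show rdot a (∑ v ∈ V, w v • v) = ∑ v ∈ V, rdot a (w v • v) from
          map_sum (rdotL a) _ _]
        congr 1; ext v; rw [rdot_smul]
      have h2 : ∑ v ∈ V, w v * c = c := by
        rw [← Finset.sum_mul, hw1, one_mul]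
      calc ∑ v ∈ V, w v * (c - rdot a v) = (∑ v ∈ V, w v * c) - ∑ v ∈ V, w v * rdot a v := by
            rw [← Finset.sum_sub_distrib]; congr 1; ext v; ring
        _ = c - rdot a x := by rw [h1, h2]
        _ = 0 := by rw [hxc, sub_self]
    intro v hv
    have hnn : ∀ v ∈ V, 0 ≤ w v * (c - rdot a v) := fun v hv =>
      mul_nonneg (hw0 v hv) (sub_nonneg.mpr (hval v hv))
    exact (Finset.sum_eq_zero_iff_of_nonneg hnn).mp hsum v hv
  -- so w is supported on the filter
  set S := V.filter (fun v => rdot a v = c) with hS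
  rw [Finset.convexHull_eq]
  refine ⟨w, fun v hv => hw0 v (Finset.mem_filter.mp hv).1, ?_, ?_⟩
  · rw [← hw1]
    apply Finset.sum_subset (Finset.filter_subset _ _)
    intro v hv hvS
    have := key v hv
    rcases mul_eq_zero.mp this with h | h
    · exact h
    · exfalso; apply hvS; rw [Finset.mem_filter]
      exact ⟨hv, by linarith [sub_eq_zero.mp h]⟩
  · rw [Finset.centerMass_subset id (Finset.filter_subset _ _), Finset.centerMass_eq_of_sum_1 _ _ hw1]
    · exact hwx
    · intro v hv hvS
      have := key v hv
      rcases mul_eq_zero.mp this with h | h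
      · exact h
      · exfalso; apply hvS; rw [Finset.mem_filter]
        exact ⟨hv, by linarith [sub_eq_zero.mp h]⟩

/-- a hyperplane has empty interior -/
lemma interior_hyperplane_empty {a : Fin d → ℝ} (ha : a ≠ 0) (c : ℝ) :
    interior {x : Fin d → ℝ | rdot a x = c} = ∅ := by
  classical
  obtain ⟨i, hi⟩ : ∃ i, a i ≠ 0 := by
    by_contra h; push_neg at h; exact ha (funext h)
  rw [Set.eq_empty_iff_forall_notMem]
  intro x hx
  obtain ⟨ε, hε, hball⟩ := Metric.isOpen_iff.mp isOpen_interior x hx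
  set y := x + (ε / 2) • (Pi.single i 1 : Fin d → ℝ) with hy
  have hyb : y ∈ Metric.ball x ε := by
    rw [Metric.mem_ball, dist_eq_norm]
    have h2 : y - x = (ε / 2) • (Pi.single i 1 : Fin d → ℝ) := by rw [hy]; abel
    rw [h2, norm_smul]
    have h1 : ‖(Pi.single i 1 : Fin d → ℝ)‖ ≤ 1 := by
      apply pi_norm_le_iff_of_nonneg zero_le_one |>.mpr
      intro j
      rcases eq_or_ne j i with rfl | hne
      · simp
      · simp [Pi.single_apply, hne]
    calc ‖(ε/2)‖ * ‖(Pi.single i 1 : Fin d → ℝ)‖ ≤ ‖(ε/2)‖ * 1 :=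
          mul_le_mul_of_nonneg_left h1 (norm_nonneg _)
      _ = ε / 2 := by rw [mul_one, Real.norm_eq_abs, abs_of_pos (by positivity)]
      _ < ε := by linarith
  have h3 : rdot a y = c := (interior_subset (hball hyb) : _)
  have h4 : rdot a y = rdot a x + (ε / 2) * a i := by
    rw [hy, rdot_add, rdot_smul, rdot_single, mul_one]
  have h5 : rdot a x = c := (interior_subset hx : _)
  rw [h4, h5] at h3
  have : (ε / 2) * a i = 0 := by linarith
  rcases mul_eq_zero.mp this with h | h
  · linarith
  · exact hi h

end Stmt13

namespace Stmt13

variable {d : ℕ}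

lemma rdot_add_left (a b x : Fin d → ℝ) : rdot (a + b) x = rdot a x + rdot b x := by
  simp [rdot, add_mul, Finset.sum_add_distrib]

lemma rdot_neg_right (a x : Fin d → ℝ) : rdot a (-x) = - rdot a x := by
  simp [rdot]

/-- separate a vector from a submodule by a dot-product functional -/
lemma exists_rdot_sep (D : Submodule ℝ (Fin d → ℝ)) {w₀ : Fin d → ℝ} (hw : w₀ ∉ D) :
    ∃ b : Fin d → ℝ, (∀ v ∈ D, rdot b v = 0) ∧ rdot b w₀ = 1 := by
  obtain ⟨f, hf0, hfD⟩ := Submodule.exists_dual_map_eq_bot_of_notMem hw inferInstance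
  have hker : ∀ v ∈ D, f v = 0 := by
    intro v hv
    have : f v ∈ Submodule.map f D := Submodule.mem_map_of_mem hv
    rw [hfD] at this
    simpa using this
  set g : (Fin d → ℝ) →ₗ[ℝ] ℝ := (f w₀)⁻¹ • f with hg
  refine ⟨fun i => g (Pi.single i 1), ?_, ?_⟩
  · intro v hv
    rw [← exists_rdot_eq g v]
    rw [hg]
    simp [hker v hv]
  · rw [← exists_rdot_eq g w₀, hg]
    simp [inv_mul_cancel₀ hf0]

lemma vectorSpan_le_ker {V : Finset (Fin d → ℝ)} {a : Fin d → ℝ} {c : ℝ} :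
    vectorSpan ℝ ((V.filter (fun v => rdot a v = c)) : Set (Fin d → ℝ)) ≤ LinearMap.ker (rdotL a) := by
  rw [vectorSpan_def, Submodule.span_le]
  rintro x ⟨p, hp, q, hq, rfl⟩
  simp only [SetLike.mem_coe, LinearMap.mem_ker, rdotL_apply, vsub_eq_sub, rdot_sub]
  simp only [Finset.coe_filter, Set.mem_setOf_eq] at hp hq
  rw [hp.2, hq.2, sub_self]

/-- The rotation step: push the supporting hyperplane to catch one more vertex. -/
lemma rotate_step (V : Finset (Fin d → ℝ)) (a : Fin d → ℝ) (c : ℝ)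
    (hval : ∀ v ∈ V, rdot a v ≤ c)
    (z₀ : Fin d → ℝ) (hz₀V : z₀ ∈ V) (hz₀ : rdot a z₀ = c)
    (b : Fin d → ℝ) (c₂ : ℝ) (hbS : ∀ v ∈ V, rdot a v = c → rdot b v = c₂)
    (w₀ : Fin d → ℝ) (haw : rdot a w₀ = 0) (hbw : rdot b w₀ = 1)
    (hW : ∃ v ∈ V, c₂ < rdot b v) :
    ∃ (a' : Fin d → ℝ) (c' : ℝ), a' ≠ 0 ∧ (∀ v ∈ V, rdot a' v ≤ c') ∧
      (∀ v ∈ V, rdot a v = c → rdot a' v = c') ∧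
      ∃ w, w ∈ V ∧ rdot a' w = c' ∧ rdot a w ≠ c := by
  classical
  set W := V.filter (fun v => c₂ < rdot b v) with hWdef
  have hWne : W.Nonempty := by
    obtain ⟨v, hv, hvb⟩ := hW
    exact ⟨v, Finset.mem_filter.mpr ⟨hv, hvb⟩⟩
  have hWlt : ∀ v ∈ W, rdot a v < c := by
    intro v hv
    rw [hWdef, Finset.mem_filter] at hv
    rcases lt_or_eq_of_le (hval v hv.1) with h | h
    · exact h
    · exfalso; have := hbS v hv.1 h; linarith [hv.2]
  set t : ℝ := W.inf' hWne (fun v => (c - rdot a v) / (rdot b v - c₂)) with ht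
  have htpos : 0 < t := by
    rw [ht, Finset.lt_inf'_iff]
    intro v hv
    have h1 := hWlt v hv
    have h2 : c₂ < rdot b v := (Finset.mem_filter.mp hv).2
    exact div_pos (by linarith) (by linarith)
  have htle : ∀ v ∈ W, t * (rdot b v - c₂) ≤ c - rdot a v := by
    intro v hv
    have h2 : c₂ < rdot b v := (Finset.mem_filter.mp hv).2
    have := Finset.inf'_le (fun v => (c - rdot a v) / (rdot b v - c₂)) hv
    rw [← ht] at this
    calc t * (rdot b v - c₂) ≤ ((c - rdot a v) / (rdot b v - c₂)) * (rdot b v - c₂) :=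
          mul_le_mul_of_nonneg_right this (by linarith)
      _ = c - rdot a v := div_mul_cancel₀ _ (by linarith)
  set a' := a + t • b with ha'
  set c' := c + t * c₂ with hc'
  have key : ∀ v, rdot a' v = rdot a v + t * rdot b v := by
    intro v; rw [ha', rdot_add_left, rdot_smul_left]
  have heqpres : ∀ v ∈ V, rdot a v = c → rdot a' v = c' := by
    intro v hv hvc
    rw [key, hvc, hbS v hv hvc, hc']
  have hval' : ∀ v ∈ V, rdot a' v ≤ c' := by
    intro v hv
    rcases eq_or_lt_of_le (hval v hv) with h | h
    · exact le_of_eq (heqpres v hv h)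
    · rw [key, hc']
      rcases le_or_gt (rdot b v) c₂ with hb | hb
      · nlinarith
      · have hvW : v ∈ W := Finset.mem_filter.mpr ⟨hv, hb⟩
        have := htle v hvW
        linarith
  obtain ⟨w, hwW, hwt⟩ := Finset.exists_mem_eq_inf' hWne (fun v => (c - rdot a v) / (rdot b v - c₂))
  have hwV : w ∈ V := (Finset.mem_filter.mp hwW).1
  have hwb : c₂ < rdot b w := (Finset.mem_filter.mp hwW).2
  have hwa : rdot a w ≠ c := fun h => by have := hbS w hwV h; linarith
  have hweq : rdot a' w = c' := by
    have hde : t = (c - rdot a w) / (rdot b w - c₂) := by rw [ht, ← hwt]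
    have h4 : t * (rdot b w - c₂) = c - rdot a w := by
      rw [hde, div_mul_cancel₀ _ (show rdot b w - c₂ ≠ 0 by linarith)]
    rw [key, hc']
    nlinarith [h4]
  have ha'0 : a' ≠ 0 := by
    intro h0
    have h1 : rdot a' (z₀ + w₀) = c' + t := by
      rw [key, rdot_add, rdot_add, hz₀, haw, hbS z₀ hz₀V hz₀, hbw, hc']
      ring
    have h2 : rdot a' (z₀ + w₀) = 0 := by rw [h0]; simp [rdot]
    have h3 : rdot a' w = 0 := by rw [h0]; simp [rdot]
    rw [hweq] at h3
    rw [h2] at h1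
    linarith
  exact ⟨a', c', ha'0, hval', heqpres, w, hwV, hweq, hwa⟩

end Stmt13

namespace Stmt13

variable {d : ℕ}

lemma rotate_to_facet (V : Finset (Fin d → ℝ))
    (hful : (interior (convexHull ℝ (V : Set (Fin d → ℝ)))).Nonempty) :
    ∀ (N : ℕ) (a : Fin d → ℝ) (c : ℝ), a ≠ 0 →
    (V.filter (fun v => rdot a v = c)).Nonempty →
    V.card - (V.filter (fun v => rdot a v = c)).card ≤ N →
    (∀ v ∈ V, rdot a v ≤ c) →
    ∃ (a' : Fin d → ℝ) (c' : ℝ), a' ≠ 0 ∧ (∀ v ∈ V, rdot a' v ≤ c') ∧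
      (∀ v ∈ V, rdot a v = c → rdot a' v = c') ∧
      Module.finrank ℝ
        (vectorSpan ℝ ((V.filter (fun v => rdot a' v = c')) : Set (Fin d → ℝ))) = d - 1 := by
  classical
  intro N
  induction N with
  | zero =>
    intro a c ha hSne hcard hval
    -- here S = V, so the hull lies in a hyperplane: contradiction with full-dimensionality
    exfalso
    have hSV : V.filter (fun v => rdot a v = c) = V := by
      apply Finset.eq_of_subset_of_card_le (Finset.filter_subset _ _)
      have := Finset.card_le_card (Finset.filter_subset (fun v => rdot a v = c) V)
      omega
    have hsub : (V : Set (Fin d → ℝ)) ⊆ {x | rdot a x = c} := by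
      intro v hv
      have : v ∈ V.filter (fun v => rdot a v = c) := by rw [hSV]; exact_mod_cast hv
      exact (Finset.mem_filter.mp this).2
    have : convexHull ℝ (V : Set (Fin d → ℝ)) ⊆ {x | rdot a x = c} :=
      convexHull_min hsub (convex_hyperplane (rdot_isLinear a) c)
    obtain ⟨x, hx⟩ := hful
    have := interior_mono this hx
    rw [interior_hyperplane_empty ha c] at this
    exact this
  | succ n ih =>
    intro a c ha hSne hcard hval
    set S := V.filter (fun v => rdot a v = c) with hS
    by_cases hdim : Module.finrank ℝ (vectorSpan ℝ (S : Set (Fin d → ℝ))) = d - 1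
    · exact ⟨a, c, ha, hval, fun v hv hvc => hvc, by rw [← hS]; exact hdim⟩
    · -- the face is too small: rotate
      have hle : vectorSpan ℝ (S : Set (Fin d → ℝ)) ≤ LinearMap.ker (rdotL a) :=
        vectorSpan_le_ker
      have hklt : Module.finrank ℝ (vectorSpan ℝ (S : Set (Fin d → ℝ))) ≤ d - 1 := by
        have := Submodule.finrank_mono hle
        rwa [finrank_ker_rdot ha] at this
      have hne : vectorSpan ℝ (S : Set (Fin d → ℝ)) ≠ LinearMap.ker (rdotL a) := by
        intro h
        rw [h, finrank_ker_rdot ha] at hdim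
        exact hdim rfl
      obtain ⟨w₀, hw₀k, hw₀s⟩ := SetLike.exists_of_lt (lt_of_le_of_ne hle hne)
      obtain ⟨b, hbv, hbw⟩ := exists_rdot_sep _ hw₀s
      have haw : rdot a w₀ = 0 := by
        have := hw₀k; rw [LinearMap.mem_ker] at this; simpa using this
      obtain ⟨z₀, hz₀S⟩ := hSne
      have hz₀V : z₀ ∈ V := (Finset.mem_filter.mp hz₀S).1
      have hz₀ : rdot a z₀ = c := (Finset.mem_filter.mp hz₀S).2
      set c₂ := rdot b z₀ with hc₂
      have hbS : ∀ v ∈ V, rdot a v = c → rdot b v = c₂ := by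
        intro v hv hvc
        have hvS : v ∈ S := Finset.mem_filter.mpr ⟨hv, hvc⟩
        have : (v : Fin d → ℝ) -ᵥ z₀ ∈ vectorSpan ℝ (S : Set (Fin d → ℝ)) :=
          vsub_mem_vectorSpan ℝ (by exact_mod_cast hvS) (by exact_mod_cast hz₀S)
        have h0 := hbv _ this
        rw [vsub_eq_sub, rdot_sub] at h0
        rw [hc₂]; linarith
      -- S ≠ V
      have hSV : S ≠ V := by
        intro h
        have hsub : (V : Set (Fin d → ℝ)) ⊆ {x | rdot a x = c} := by
          intro v hv
          have : v ∈ S := by rw [h]; exact_mod_cast hv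
          exact (Finset.mem_filter.mp this).2
        have hh : convexHull ℝ (V : Set (Fin d → ℝ)) ⊆ {x | rdot a x = c} :=
          convexHull_min hsub (convex_hyperplane (rdot_isLinear a) c)
        obtain ⟨x, hx⟩ := hful
        have := interior_mono hh hx
        rw [interior_hyperplane_empty ha c] at this
        exact this
      have hcardlt : S.card < V.card :=
        Finset.card_lt_card (lt_of_le_of_ne (Finset.filter_subset _ _) hSV)
      -- find a step direction
      have hstep : ∃ (a' : Fin d → ℝ) (c' : ℝ), a' ≠ 0 ∧ (∀ v ∈ V, rdot a' v ≤ c') ∧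
          (∀ v ∈ V, rdot a v = c → rdot a' v = c') ∧
          ∃ w, w ∈ V ∧ rdot a' w = c' ∧ rdot a w ≠ c := by
        by_cases hp : ∃ v ∈ V, c₂ < rdot b v
        · exact rotate_step V a c hval z₀ hz₀V hz₀ b c₂ hbS w₀ haw hbw hp
        · by_cases hm : ∃ v ∈ V, -c₂ < rdot (-b) v
          · apply rotate_step V a c hval z₀ hz₀V hz₀ (-b) (-c₂)
              (fun v hv hvc => by rw [rdot_neg_left, hbS v hv hvc])
              (-w₀) (by rw [rdot_neg_right, haw, neg_zero])
              (by rw [rdot_neg_left, rdot_neg_right, hbw]; ring) hm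
          · exfalso
            push_neg at hp hm
            have hball : ∀ v ∈ V, rdot b v = c₂ := by
              intro v hv
              have h1 := hp v hv
              have h2 := hm v hv
              rw [rdot_neg_left] at h2
              linarith
            have hb0 : b ≠ 0 := by
              intro h; rw [h] at hbw; simp [rdot] at hbw
            have hsub : (V : Set (Fin d → ℝ)) ⊆ {x | rdot b x = c₂} := fun v hv =>
              hball v (by exact_mod_cast hv)
            have hh : convexHull ℝ (V : Set (Fin d → ℝ)) ⊆ {x | rdot b x = c₂} :=
              convexHull_min hsub (convex_hyperplane (rdot_isLinear b) c₂)
            obtain ⟨x, hx⟩ := hful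
            have := interior_mono hh hx
            rw [interior_hyperplane_empty hb0 c₂] at this
            exact this
      obtain ⟨a', c', ha'0, hval', hpres, w, hwV, hweq, hwa⟩ := hstep
      -- apply induction
      have hS'big : S.card + 1 ≤ (V.filter (fun v => rdot a' v = c')).card := by
        have hsub : insert w S ⊆ V.filter (fun v => rdot a' v = c') := by
          intro v hv
          rcases Finset.mem_insert.mp hv with rfl | hv
          · exact Finset.mem_filter.mpr ⟨hwV, hweq⟩
          · rcases Finset.mem_filter.mp hv with ⟨h1, h2⟩
            exact Finset.mem_filter.mpr ⟨h1, hpres v h1 h2⟩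
        have hwS : w ∉ S := fun h => hwa (Finset.mem_filter.mp h).2
        calc S.card + 1 = (insert w S).card := (Finset.card_insert_of_notMem hwS).symm
          _ ≤ _ := Finset.card_le_card hsub
      obtain ⟨a'', c'', h1, h2, h3, h4⟩ := ih a' c' ha'0
        ⟨z₀, Finset.mem_filter.mpr ⟨hz₀V, hpres z₀ hz₀V hz₀⟩⟩
        (by
          have := Finset.card_le_card
            (Finset.filter_subset (fun v => rdot a' v = c') V)
          omega)
        hval'
      exact ⟨a'', c'', h1, h2, fun v hv hvc => h3 v hv (hpres v hv hvc), h4⟩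

end Stmt13

namespace Stmt13

variable {d : ℕ}

/-- interior points are strictly inside valid inequalities -/
lemma lt_of_interior {P : Set (Fin d → ℝ)} {a : Fin d → ℝ} {c : ℝ} (ha : a ≠ 0)
    (hval : ∀ y ∈ P, rdot a y ≤ c) {x : Fin d → ℝ} (hx : x ∈ interior P) :
    rdot a x < c := by
  classical
  obtain ⟨i, hi⟩ : ∃ i, a i ≠ 0 := by
    by_contra h; push_neg at h; exact ha (funext h)
  obtain ⟨ε, hε, hball⟩ := Metric.isOpen_iff.mp isOpen_interior x hx
  set σ : ℝ := if 0 < a i then 1 else -1 with hσ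
  have hσa : σ * a i = |a i| := by
    rcases lt_trichotomy (a i) 0 with h | h | h
    · rw [hσ, if_neg (by linarith), abs_of_neg h]; ring
    · exact absurd h hi
    · rw [hσ, if_pos h, abs_of_pos h]; ring
  set y := x + ((ε / 2) * σ) • (Pi.single i 1 : Fin d → ℝ) with hy
  have hyb : y ∈ Metric.ball x ε := by
    rw [Metric.mem_ball, dist_eq_norm]
    have h2 : y - x = ((ε / 2) * σ) • (Pi.single i 1 : Fin d → ℝ) := by rw [hy]; abel
    rw [h2, norm_smul]
    have h1 : ‖(Pi.single i 1 : Fin d → ℝ)‖ ≤ 1 := by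
      apply pi_norm_le_iff_of_nonneg zero_le_one |>.mpr
      intro j
      rcases eq_or_ne j i with rfl | hne
      · simp
      · simp [Pi.single_apply, hne]
    have hσ1 : |σ| = 1 := by
      rcases ite_eq_or_eq (0 < a i) (1:ℝ) (-1) with h | h <;> rw [hσ, h] <;> simp
    calc ‖(ε/2) * σ‖ * ‖(Pi.single i 1 : Fin d → ℝ)‖ ≤ ‖(ε/2) * σ‖ * 1 :=
          mul_le_mul_of_nonneg_left h1 (norm_nonneg _)
      _ = |ε/2| * |σ| := by rw [mul_one, Real.norm_eq_abs, abs_mul]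
      _ = ε / 2 := by rw [hσ1, mul_one, abs_of_pos (by positivity)]
      _ < ε := by linarith
  have hyP : y ∈ P := interior_subset (hball hyb)
  have h4 : rdot a y = rdot a x + (ε / 2) * |a i| := by
    rw [hy, rdot_add, rdot_smul, rdot_single, mul_one, mul_assoc, hσa]
  have h5 := hval y hyP
  have h6 : 0 < (ε / 2) * |a i| := by
    apply mul_pos (by positivity)
    exact abs_pos.mpr hi
  linarith

/-- supporting hyperplane at a frontier point of a closed convex set -/
lemma exists_supporting {P : Set (Fin d → ℝ)} (hconv : Convex ℝ P) (hclosed : IsClosed P)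
    (hne : P.Nonempty) {z : Fin d → ℝ} (hz : z ∈ frontier P) :
    ∃ a : Fin d → ℝ, a ≠ 0 ∧ ∀ y ∈ P, rdot a y ≤ rdot a z := by
  classical
  have hzc : z ∈ closure Pᶜ := by
    rw [frontier_eq_closure_inter_closure] at hz
    exact hz.2
  obtain ⟨zs, hzs, hzst⟩ := mem_closure_iff_seq_limit.mp hzc
  obtain ⟨y₀, hy₀⟩ := hne
  -- separating functionals
  have hsep : ∀ n, ∃ a : Fin d → ℝ, a ≠ 0 ∧ ∀ y ∈ P, rdot a y ≤ rdot a (zs n) := by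
    intro n
    obtain ⟨f, u, hfu, hfz⟩ := geometric_hahn_banach_closed_point hconv hclosed (hzs n)
    set a : Fin d → ℝ := fun i => f (Pi.single i 1) with ha
    have hfa : ∀ x, f x = rdot a x := fun x => exists_rdot_eq (f : (Fin d → ℝ) →ₗ[ℝ] ℝ) x
    have ha0 : a ≠ 0 := by
      intro h
      have h1 : f y₀ = 0 := by rw [hfa, h]; simp [rdot]
      have h2 : f (zs n) = 0 := by rw [hfa, h]; simp [rdot]
      have h3 : f y₀ < f (zs n) := lt_trans (hfu y₀ hy₀) hfz
      rw [h1, h2] at h3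
      exact lt_irrefl 0 h3
    exact ⟨a, ha0, fun y hy => by
      rw [← hfa, ← hfa]
      exact le_of_lt (lt_trans (hfu y hy) hfz)⟩
  choose as has0 hasP using hsep
  set u : ℕ → (Fin d → ℝ) := fun n => ‖as n‖⁻¹ • as n with hu
  have hun : ∀ n, u n ∈ Metric.sphere (0 : Fin d → ℝ) 1 := by
    intro n
    have h1 : ‖as n‖ ≠ 0 := norm_ne_zero_iff.mpr (has0 n)
    simp only [Metric.mem_sphere, dist_zero_right, hu, norm_smul, norm_inv, norm_norm]
    exact inv_mul_cancel₀ h1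
  have huP : ∀ n, ∀ y ∈ P, rdot (u n) y ≤ rdot (u n) (zs n) := by
    intro n y hy
    rw [hu]
    simp only [rdot_smul_left]
    exact mul_le_mul_of_nonneg_left (hasP n y hy) (by positivity)
  obtain ⟨a, haS, φ, hφ, hφt⟩ := (isCompact_sphere (0 : Fin d → ℝ) 1).tendsto_subseq hun
  have ha0 : a ≠ 0 := by
    intro h
    rw [h] at haS
    simp at haS
  refine ⟨a, ha0, fun y hy => ?_⟩
  have h1 : Filter.Tendsto (fun n => rdot (u (φ n)) y) Filter.atTop (nhds (rdot a y)) := by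
    have : Filter.Tendsto (fun n => ((u (φ n)), y)) Filter.atTop (nhds (a, y)) :=
      Filter.Tendsto.prodMk_nhds hφt tendsto_const_nhds
    exact (continuous_rdot2.tendsto _).comp this
  have h2 : Filter.Tendsto (fun n => rdot (u (φ n)) (zs (φ n))) Filter.atTop
      (nhds (rdot a z)) := by
    have hz2 : Filter.Tendsto (fun n => zs (φ n)) Filter.atTop (nhds z) :=
      hzst.comp hφ.tendsto_atTop
    have : Filter.Tendsto (fun n => ((u (φ n)), zs (φ n))) Filter.atTop (nhds (a, z)) :=
      Filter.Tendsto.prodMk_nhds hφt hz2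
    exact (continuous_rdot2.tendsto _).comp this
  exact le_of_tendsto_of_tendsto' h1 h2 (fun n => huP (φ n) y hy)

end Stmt13

namespace Stmt13

variable {d : ℕ}

lemma face_eq_hull_filter (V : Finset (Fin d → ℝ)) {a : Fin d → ℝ} {c : ℝ}
    (hval : ∀ v ∈ V, rdot a v ≤ c) :
    {y ∈ convexHull ℝ (V : Set (Fin d → ℝ)) | rdot a y = c} =
      convexHull ℝ ((V.filter (fun v => rdot a v = c)) : Set (Fin d → ℝ)) := by
  apply Set.eq_of_subset_of_subset
  · rintro y ⟨hy, hyc⟩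
    exact face_subset_hull_filter hval hy hyc
  · intro y hy
    constructor
    · exact convexHull_mono (by exact_mod_cast Finset.filter_subset _ _) hy
    · have h1 : (↑(V.filter (fun v => rdot a v = c)) : Set (Fin d → ℝ)) ⊆ {x | rdot a x = c} := by
        intro v hv
        exact (Finset.mem_filter.mp (by exact_mod_cast hv)).2
      exact convexHull_min h1 (convex_hyperplane (rdot_isLinear a) c) hy

/-- every point outside the polytope is cut off by a facet-defining halfspace -/
lemma facets_suffice (V : Finset (Fin d → ℝ)) (P : Set (Fin d → ℝ))
    (hP : P = convexHull ℝ (V : Set (Fin d → ℝ)))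
    (hful : (interior P).Nonempty) {x : Fin d → ℝ} (hx : x ∉ P) :
    ∃ (a : Fin d → ℝ) (c : ℝ), a ≠ 0 ∧ (∀ y ∈ P, rdot a y ≤ c) ∧
      ({y ∈ P | rdot a y = c}).Nonempty ∧
      Module.finrank ℝ (affineSpan ℝ {y ∈ P | rdot a y = c}).direction = d - 1 ∧
      c < rdot a x := by
  classical
  obtain ⟨q, hq⟩ := hful
  have hqP : q ∈ P := interior_subset hq
  have hPconv : Convex ℝ P := by rw [hP]; exact convex_convexHull ℝ _
  have hPcomp : IsCompact P := by rw [hP]; exact (V.finite_toSet).isCompact_convexHull ℝ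
  have hPcl : IsClosed P := hPcomp.isClosed
  -- the exit point of the segment from q to x
  set T : Set ℝ := {s | s ∈ Set.Icc (0:ℝ) 1 ∧ q + s • (x - q) ∈ P} with hT
  have hTcl : IsClosed T := by
    apply IsClosed.inter isClosed_Icc
    have hcont : Continuous (fun s : ℝ => q + s • (x - q)) := by continuity
    exact hPcl.preimage hcont
  have hT0 : (0:ℝ) ∈ T := by
    constructor
    · exact Set.mem_Icc.mpr ⟨le_refl _, zero_le_one⟩
    · simpa using hqP
  have hTbdd : BddAbove T := ⟨1, fun s hs => hs.1.2⟩
  set s₀ : ℝ := sSup T with hs₀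
  have hs₀T : s₀ ∈ T := hTcl.csSup_mem ⟨0, hT0⟩ hTbdd
  have hs₀1 : s₀ ≤ 1 := hs₀T.1.2
  have hs₀0 : 0 ≤ s₀ := hs₀T.1.1
  set z : Fin d → ℝ := q + s₀ • (x - q) with hzdef
  have hzP : z ∈ P := hs₀T.2
  have hs₀lt1 : s₀ < 1 := by
    rcases lt_or_eq_of_le hs₀1 with h | h
    · exact h
    · exfalso; apply hx
      have := hs₀T.2
      rw [h] at this
      simpa using this
  have hxq : x ≠ q := fun h => hx (h ▸ hqP)
  -- z is not interior
  have hznint : z ∉ interior P := by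
    intro hzint
    obtain ⟨ε, hε, hball⟩ := Metric.isOpen_iff.mp isOpen_interior z hzint
    have hnorm : 0 < ‖x - q‖ := by
      rw [norm_pos_iff]
      intro h
      exact hxq (by rwa [sub_eq_zero] at h)
    set δ : ℝ := min ((1 - s₀)/2) (ε / (2 * ‖x - q‖)) with hδdef
    have hδpos : 0 < δ := by
      apply lt_min
      · linarith
      · positivity
    have hs' : s₀ + δ ∈ T := by
      constructor
      · constructor
        · linarith
        · have : δ ≤ (1 - s₀)/2 := min_le_left _ _
          linarith
      · apply interior_subset
        apply hball
        rw [Metric.mem_ball, dist_eq_norm]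
        have heq : (q + (s₀ + δ) • (x - q)) - z = δ • (x - q) := by
          rw [hzdef, add_smul]; abel
        rw [heq, norm_smul, Real.norm_eq_abs, abs_of_pos hδpos]
        have h1 : δ ≤ ε / (2 * ‖x - q‖) := min_le_right _ _
        calc δ * ‖x - q‖ ≤ (ε / (2 * ‖x - q‖)) * ‖x - q‖ :=
              mul_le_mul_of_nonneg_right h1 (norm_nonneg _)
          _ = ε / 2 := by field_simp
          _ < ε := by linarith
    have := le_csSup hTbdd hs'
    rw [← hs₀] at this
    linarith
  have hzfr : z ∈ frontier P := by
    rw [hPcl.frontier_eq]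
    exact ⟨hzP, hznint⟩
  -- supporting hyperplane at z
  obtain ⟨a₀, ha₀, ha₀P⟩ := exists_supporting hPconv hPcl ⟨q, hqP⟩ hzfr
  set c₀ := rdot a₀ z with hc₀
  have hval₀ : ∀ v ∈ V, rdot a₀ v ≤ c₀ := by
    intro v hv
    apply ha₀P
    rw [hP]
    exact subset_convexHull ℝ _ hv
  -- z belongs to the hull of the touching vertices
  have hzhull : z ∈ convexHull ℝ ((V.filter (fun v => rdot a₀ v = c₀)) : Set (Fin d → ℝ)) := by
    apply face_subset_hull_filter hval₀ _ rfl
    rw [← hP]; exact hzP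
  have hfilne : (V.filter (fun v => rdot a₀ v = c₀)).Nonempty := by
    by_contra h
    rw [Finset.not_nonempty_iff_eq_empty] at h
    rw [h] at hzhull
    simp at hzhull
  -- rotate to a facet
  have hfulV : (interior (convexHull ℝ (V : Set (Fin d → ℝ)))).Nonempty := by
    rw [← hP]; exact ⟨q, hq⟩
  obtain ⟨a, c, ha, hvalV, hpres, hdim⟩ := rotate_to_facet V hfulV V.card a₀ c₀ ha₀ hfilne
    (by omega) hval₀
  have hvalP : ∀ y ∈ P, rdot a y ≤ c := by
    rw [hP]; exact rdot_le_on_hull hvalV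
  -- z is on the facet hyperplane
  have hza : rdot a z = c := by
    have h1 : (↑(V.filter (fun v => rdot a₀ v = c₀)) : Set (Fin d → ℝ)) ⊆ {w | rdot a w = c} := by
      intro v hv
      rcases Finset.mem_filter.mp (by exact_mod_cast hv) with ⟨h2, h3⟩
      exact hpres v h2 h3
    exact convexHull_min h1 (convex_hyperplane (rdot_isLinear a) c) hzhull
  -- facet data
  have hface : {y ∈ P | rdot a y = c} =
      convexHull ℝ ((V.filter (fun v => rdot a v = c)) : Set (Fin d → ℝ)) := by
    rw [hP]; exact face_eq_hull_filter V hvalV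
  have hfrk : Module.finrank ℝ (affineSpan ℝ {y ∈ P | rdot a y = c}).direction = d - 1 := by
    rw [hface, affineSpan_convexHull, direction_affineSpan]
    exact hdim
  refine ⟨a, c, ha, hvalP, ⟨z, hzP, hza⟩, hfrk, ?_⟩
  -- strict violation at x
  have hq_lt : rdot a q < c := lt_of_interior ha hvalP hq
  have hs₀pos : 0 < s₀ := by
    rcases lt_or_eq_of_le hs₀0 with h | h
    · exact h
    · exfalso
      apply hznint
      rw [hzdef, ← h]
      simpa using hq
  have hlin : rdot a z = rdot a q + s₀ * (rdot a x - rdot a q) := by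
    rw [hzdef, rdot_add, rdot_smul, rdot_sub]
  rw [hza] at hlin
  nlinarith [hs₀pos, hs₀lt1, hq_lt]

end Stmt13


namespace Stmt13

variable {d : ℕ}

lemma rdot_sub_left (a b x : Fin d → ℝ) : rdot (a - b) x = rdot a x - rdot b x := by
  simp [rdot, sub_mul, Finset.sum_sub_distrib]

lemma vectorSpan_le_ker_of_subset {s : Set (Fin d → ℝ)} {a : Fin d → ℝ} {c : ℝ}
    (h : s ⊆ {x | rdot a x = c}) : vectorSpan ℝ s ≤ LinearMap.ker (rdotL a) := by
  rw [vectorSpan_def, Submodule.span_le]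
  rintro x ⟨p, hp, q, hq, rfl⟩
  simp only [SetLike.mem_coe, LinearMap.mem_ker, rdotL_apply, vsub_eq_sub, rdot_sub]
  rw [h hp, h hq, sub_self]

/-- the affine span of a (d-1)-dimensional subset of a hyperplane is the hyperplane -/
lemma affineSpan_face_eq {F : Set (Fin d → ℝ)} {a : Fin d → ℝ} {c : ℝ} (ha : a ≠ 0)
    (hFne : F.Nonempty) (hFsub : F ⊆ {x | rdot a x = c})
    (hrk : Module.finrank ℝ (affineSpan ℝ F).direction = d - 1) :
    ((affineSpan ℝ F : AffineSubspace ℝ (Fin d → ℝ)) : Set (Fin d → ℝ)) = {x | rdot a x = c} := by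
  obtain ⟨z₀, hz₀⟩ := hFne
  have hz₀c : rdot a z₀ = c := hFsub hz₀
  have hdirle : (affineSpan ℝ F).direction ≤ LinearMap.ker (rdotL a) := by
    rw [direction_affineSpan]
    exact vectorSpan_le_ker_of_subset hFsub
  have hdir : (affineSpan ℝ F).direction = LinearMap.ker (rdotL a) := by
    apply Submodule.eq_of_le_of_finrank_le hdirle
    rw [finrank_ker_rdot ha, hrk]
  apply Set.eq_of_subset_of_subset
  · intro y hy
    have h1 : y -ᵥ z₀ ∈ (affineSpan ℝ F).direction :=
      AffineSubspace.vsub_mem_direction hy (subset_affineSpan ℝ F hz₀)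
    rw [hdir, LinearMap.mem_ker] at h1
    have : rdot a (y - z₀) = 0 := h1
    rw [rdot_sub] at this
    show rdot a y = c
    rw [← hz₀c]; linarith
  · intro x hx
    have h1 : x - z₀ ∈ (affineSpan ℝ F).direction := by
      rw [hdir, LinearMap.mem_ker]
      show rdot a (x - z₀) = 0
      rw [rdot_sub, (hx : rdot a x = c), hz₀c, sub_self]
    have h2 := AffineSubspace.vadd_mem_of_mem_direction h1 (subset_affineSpan ℝ F hz₀)
    have h3 : (x - z₀) +ᵥ z₀ = x := by simp
    rwa [h3] at h2

/-- two descriptions of the same hyperplane are proportional -/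
lemma hyperplane_eq_prop {a a' : Fin d → ℝ} {c c' : ℝ} (ha : a ≠ 0) (ha' : a' ≠ 0)
    (h : {x : Fin d → ℝ | rdot a x = c} = {x | rdot a' x = c'}) :
    ∃ lam : ℝ, lam ≠ 0 ∧ a = lam • a' ∧ c = lam * c' := by
  classical
  obtain ⟨i, hi⟩ : ∃ i, a' i ≠ 0 := by
    by_contra hc; push_neg at hc; exact ha' (funext hc)
  obtain ⟨v', hv'1⟩ : ∃ v', rdot a' v' = 1 :=
    ⟨(a' i)⁻¹ • (Pi.single i 1 : Fin d → ℝ), by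
      rw [rdot_smul, rdot_single, mul_one, inv_mul_cancel₀ hi]⟩
  have hmem : ∀ w, rdot a' w = c' → rdot a w = c := by
    intro w hw
    have hw2 : w ∈ {x : Fin d → ℝ | rdot a' x = c'} := hw
    rw [← h] at hw2
    exact hw2
  have hx₀H : rdot a (c' • v') = c := hmem _ (by rw [rdot_smul, hv'1, mul_one])
  have hx₀H' : c' * rdot a v' = c := by rw [← rdot_smul]; exact hx₀H
  have key : ∀ w, rdot a w = rdot a v' * rdot a' w := by
    intro w
    have hz' : rdot a' (c' • v' + (w - (rdot a' w) • v')) = c' := by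
      rw [rdot_add, rdot_sub, rdot_smul, rdot_smul, hv'1]; ring
    have hz := hmem _ hz'
    rw [rdot_add, rdot_sub, rdot_smul, rdot_smul] at hz
    nlinarith [hz, hx₀H']
  have haeq : a = rdot a v' • a' := by
    funext l
    have hk := key (Pi.single l 1)
    rw [rdot_single, rdot_single, mul_one, mul_one] at hk
    simpa using hk
  have hlam0 : rdot a v' ≠ 0 := by
    intro h0
    rw [h0, zero_smul] at haeq
    exact ha haeq
  refine ⟨rdot a v', hlam0, haeq, ?_⟩
  have h2 := key (c' • v')
  rw [hx₀H, rdot_smul, hv'1, mul_one] at h2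
  exact h2

/-- integer coefficient vector of the `i`-th extended coordinate -/
def coefZ {d : ℕ} (i : Fin (d + 1)) : Fin d → ℤ := fun l => if i = l.succ then 1 else 0

/-- real coefficient vector of the `i`-th extended coordinate -/
def coefR {d : ℕ} (i : Fin (d + 1)) : Fin d → ℝ := fun l => ((coefZ i l : ℤ) : ℝ)

lemma rdot_coefR (i : Fin (d + 1)) (y : Fin d → ℝ) : rdot (coefR i) y = extCoord y i := by
  classical
  refine Fin.cases ?_ ?_ i
  · have : coefR (0 : Fin (d+1)) = 0 := by
      funext l
      simp [coefR, coefZ, (Fin.succ_ne_zero l).symm]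
    rw [this]
    simp [rdot, extCoord]
  · intro j
    have hc : coefR (j.succ) = fun l => if j = l then 1 else 0 := by
      funext l
      simp only [coefR, coefZ, Fin.succ_inj]
      split <;> simp
    rw [hc]
    unfold rdot
    rw [Finset.sum_eq_single j]
    · simp [extCoord]
    · intro l _ hl; simp [Ne.symm hl]
    · simp

/-- alcove data: a pair of distinct extended indices -/
lemma alcove_unit_vec {i j : Fin (d + 1)} (hij : i ≠ j) :
    ∃ vz : Fin d → ℤ, (∑ l, (coefZ i l - coefZ j l) * vz l) = 1 := by
  classical
  rcases Fin.eq_zero_or_eq_succ i with rfl | ⟨i', rfl⟩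
  · have hj : j ≠ 0 := fun hh => hij hh.symm
    rcases Fin.eq_zero_or_eq_succ j with rfl | ⟨j', rfl⟩
    · exact absurd rfl hj
    · refine ⟨fun l => if j' = l then -1 else 0, ?_⟩
      rw [Finset.sum_eq_single j']
      · simp [coefZ, Ne.symm (Fin.succ_ne_zero j')]
      · intro l _ hl; simp [Ne.symm hl]
      · simp
  · refine ⟨fun l => if i' = l then 1 else 0, ?_⟩
    rw [Finset.sum_eq_single i']
    · have hj : j ≠ i'.succ := Ne.symm hij
      simp [coefZ, hj]
    · intro l _ hl; simp [Ne.symm hl]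
    · simp

end Stmt13


namespace Stmt13

variable {d : ℕ}

lemma cast_sum_mul (a p : Fin d → ℤ) :
    ((∑ l, a l * p l : ℤ) : ℝ) = ∑ l, (a l : ℝ) * (p l : ℝ) := by
  push_cast
  rfl

lemma latticeDistAux_smul {av : Fin d → ℤ} (vz : Fin d → ℤ)
    (hvz : (∑ l, av l * vz l) = 1) {m k : ℤ} (hm : m ≠ 0) (p : Fin d → ℤ)
    (hs : (∑ l, av l * p l) < k) :
    latticeDistAux (m • av) (m * k) p = (k - ∑ l, av l * p l).toNat := by
  classical
  set s : ℤ := ∑ l, av l * p l with hsdef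
  have hsum : (∑ i, (m • av) i * p i) = m * s := by
    rw [hsdef, Finset.mul_sum]
    congr 1; funext l; simp [mul_assoc]
  have hinj : Function.Injective (fun t : ℤ => m * t) := fun x y hxy => by
    exact mul_left_cancel₀ hm hxy
  have hdiv : ∀ c : ℤ, (∃ q : Fin d → ℤ, (∑ i, (m • av) i * q i) = c) ↔ ∃ t : ℤ, m * t = c := by
    intro c
    constructor
    · rintro ⟨q, rfl⟩
      refine ⟨∑ i, av i * q i, ?_⟩
      rw [Finset.mul_sum]
      congr 1; funext l; simp [mul_assoc]
    · rintro ⟨t, rfl⟩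
      refine ⟨fun l => t * vz l, ?_⟩
      have : (∑ i, (m • av) i * (t * vz i)) = m * t * ∑ i, av i * vz i := by
        rw [Finset.mul_sum]
        congr 1; funext l; simp; ring
      rw [this, hvz, mul_one]
  unfold latticeDistAux
  rw [if_neg (by
    rw [hsum]
    intro hc
    exact absurd (mul_left_cancel₀ hm hc) (ne_of_lt hs))]
  have hseteq : {c : ℤ | (∃ q : Fin d → ℤ, (∑ i, (m • av) i * q i) = c) ∧
      min (∑ i, (m • av) i * p i) (m * k) < c ∧ c < max (∑ i, (m • av) i * p i) (m * k)} =
      (fun t : ℤ => m * t) '' (Set.Ioo s k) := by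
    ext c
    simp only [Set.mem_setOf_eq, Set.mem_image, Set.mem_Ioo, hsum, hdiv]
    rcases hm.lt_or_gt with hneg | hpos
    · have hmin : min (m * s) (m * k) = m * k := by
        apply min_eq_right; nlinarith
      have hmax : max (m * s) (m * k) = m * s := by
        apply max_eq_left; nlinarith
      rw [hmin, hmax]
      constructor
      · rintro ⟨⟨t, rfl⟩, h1, h2⟩
        exact ⟨t, ⟨by nlinarith, by nlinarith⟩, rfl⟩
      · rintro ⟨t, ⟨ht1, ht2⟩, rfl⟩
        exact ⟨⟨t, rfl⟩, by nlinarith, by nlinarith⟩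
    · have hmin : min (m * s) (m * k) = m * s := by
        apply min_eq_left; nlinarith
      have hmax : max (m * s) (m * k) = m * k := by
        apply max_eq_right; nlinarith
      rw [hmin, hmax]
      constructor
      · rintro ⟨⟨t, rfl⟩, h1, h2⟩
        exact ⟨t, ⟨by nlinarith, by nlinarith⟩, rfl⟩
      · rintro ⟨t, ⟨ht1, ht2⟩, rfl⟩
        exact ⟨⟨t, rfl⟩, by nlinarith, by nlinarith⟩
  have hcard : Nat.card {c : ℤ // (∃ q : Fin d → ℤ, (∑ i, (m • av) i * q i) = c) ∧
      min (∑ i, (m • av) i * p i) (m * k) < c ∧ c < max (∑ i, (m • av) i * p i) (m * k)} =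
      (k - s - 1).toNat := by
    have h1 : Nat.card {c : ℤ // (∃ q : Fin d → ℤ, (∑ i, (m • av) i * q i) = c) ∧
        min (∑ i, (m • av) i * p i) (m * k) < c ∧ c < max (∑ i, (m • av) i * p i) (m * k)} =
        Nat.card ((fun t : ℤ => m * t) '' (Set.Ioo s k)) := by
      apply Nat.card_congr
      apply Equiv.subtypeEquivRight
      intro c
      constructor
      · intro hc
        rw [← hseteq]
        exact hc
      · intro hc
        rw [← hseteq] at hc
        exact hc
    rw [h1, Nat.card_coe_set_eq, Set.ncard_image_of_injective _ hinj]
    have h2 : Set.Ioo s k = ↑(Finset.Ioo s k) := by rw [Finset.coe_Ioo]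
    rw [h2, Set.ncard_coe_finset, Int.card_Ioo]
  rw [hcard]
  have hs2 : s < k := hs
  clear_value s
  clear hseteq hcard hdiv hsum hinj hs hsdef
  omega

end Stmt13


namespace Stmt13

variable {d : ℕ}

lemma setOf_rdot_eq (a : Fin d → ℝ) (c : ℝ) :
    {x : Fin d → ℝ | rdot a x = c} = {x : Fin d → ℝ | (∑ i, a i * x i) = c} := rfl

lemma cast_vec_ne_zero {a : Fin d → ℤ} (ha : a ≠ 0) : (fun l => (a l : ℝ)) ≠ 0 := by
  intro h
  apply ha
  funext l
  have h2 : (a l : ℝ) = 0 := by simpa using congrFun h l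
  exact_mod_cast h2

/-- classification of the integer representations of an integer hyperplane -/
lemma int_rep_classify {av : Fin d → ℤ} (vz : Fin d → ℤ) (hvz : (∑ l, av l * vz l) = 1)
    {k : ℤ} {a : Fin d → ℤ} {b : ℤ} (ha : a ≠ 0)
    (hH : {x : Fin d → ℝ | (∑ l, (a l : ℝ) * x l) = (b : ℝ)} =
          {x : Fin d → ℝ | (∑ l, (av l : ℝ) * x l) = (k : ℝ)}) :
    ∃ m : ℤ, m ≠ 0 ∧ a = m • av ∧ b = m * k := by
  have hav0 : av ≠ 0 := by
    intro h
    rw [h] at hvz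
    simp at hvz
  have h1 : {x : Fin d → ℝ | rdot (fun l => (a l : ℝ)) x = (b : ℝ)} =
      {x : Fin d → ℝ | rdot (fun l => (av l : ℝ)) x = (k : ℝ)} := hH
  obtain ⟨lam, hlam0, haeq, hbeq⟩ :=
    hyperplane_eq_prop (cast_vec_ne_zero ha) (cast_vec_ne_zero hav0) h1
  -- lam is an integer
  set M : ℤ := ∑ l, a l * vz l with hM
  have hlamM : lam = (M : ℝ) := by
    have h2 : rdot (fun l => (a l : ℝ)) (fun l => (vz l : ℝ)) = (M : ℝ) := by
      rw [hM, cast_sum_mul]; rfl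
    have h3 : rdot (fun l => (av l : ℝ)) (fun l => (vz l : ℝ)) = 1 := by
      have := cast_sum_mul av vz
      rw [hvz] at this
      rw [show rdot (fun l => ((av l : ℤ) : ℝ)) (fun l => (vz l : ℝ)) =
        ∑ l, (av l : ℝ) * (vz l : ℝ) from rfl, ← this]
      simp
    have h4 : rdot (fun l => (a l : ℝ)) (fun l => (vz l : ℝ)) =
        lam * rdot (fun l => (av l : ℝ)) (fun l => (vz l : ℝ)) := by
      rw [haeq, rdot_smul_left]
    rw [h2, h3, mul_one] at h4
    exact h4.symm
  refine ⟨M, ?_, ?_, ?_⟩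
  · intro h
    apply hlam0
    rw [hlamM, h]
    simp
  · funext l
    have := congrFun haeq l
    rw [hlamM] at this
    have h5 : ((a l : ℤ) : ℝ) = ((M * av l : ℤ) : ℝ) := by
      push_cast
      simpa using this
    exact_mod_cast h5
  · rw [hlamM] at hbeq
    exact_mod_cast hbeq

/-- computation of the lattice distance to an alcove hyperplane -/
lemma hyperplaneLatticeDist_eq {av : Fin d → ℤ} (vz : Fin d → ℤ)
    (hvz : (∑ l, av l * vz l) = 1) (k : ℤ) (p : Fin d → ℤ)
    (hs : (∑ l, av l * p l) < k) :
    hyperplaneLatticeDist {x : Fin d → ℝ | (∑ l, (av l : ℝ) * x l) = (k : ℝ)} p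
      = (k - ∑ l, av l * p l).toNat := by
  have hav0 : av ≠ 0 := by
    intro h
    rw [h] at hvz
    simp at hvz
  set D : ℕ := (k - ∑ l, av l * p l).toNat with hD
  have hmem : D ∈ {n : ℕ | ∃ (a : Fin d → ℤ) (b : ℤ), a ≠ 0 ∧
      {x : Fin d → ℝ | (∑ l, (av l : ℝ) * x l) = (k : ℝ)} =
        {x : Fin d → ℝ | (∑ i, (a i : ℝ) * x i) = (b : ℝ)} ∧ n = latticeDistAux a b p} := by
    refine ⟨av, k, hav0, rfl, ?_⟩
    have := latticeDistAux_smul vz hvz (m := 1) one_ne_zero p hs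
    rw [one_smul, one_mul] at this
    rw [hD, this]
  have hval : ∀ n ∈ {n : ℕ | ∃ (a : Fin d → ℤ) (b : ℤ), a ≠ 0 ∧
      {x : Fin d → ℝ | (∑ l, (av l : ℝ) * x l) = (k : ℝ)} =
        {x : Fin d → ℝ | (∑ i, (a i : ℝ) * x i) = (b : ℝ)} ∧ n = latticeDistAux a b p},
      n = D := by
    rintro n ⟨a, b, ha, hHeq, rfl⟩
    obtain ⟨m, hm0, rfl, rfl⟩ := int_rep_classify vz hvz ha hHeq.symm
    rw [latticeDistAux_smul vz hvz hm0 p hs]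
  unfold hyperplaneLatticeDist
  have h2 := Nat.sInf_mem (⟨D, hmem⟩ : Set.Nonempty _)
  exact hval _ h2

end Stmt13


namespace Stmt13

variable {d : ℕ}

/-- integer alcove normal vector -/
def avZ {d : ℕ} (i j : Fin (d + 1)) : Fin d → ℤ := fun l => coefZ i l - coefZ j l

/-- real alcove normal vector -/
def avR {d : ℕ} (i j : Fin (d + 1)) : Fin d → ℝ := fun l => ((avZ i j l : ℤ) : ℝ)

lemma avR_eq (i j : Fin (d + 1)) : avR i j = coefR i - coefR j := by
  funext l
  simp only [avR, avZ, coefR, Pi.sub_apply]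
  push_cast
  ring

lemma rdot_avR (i j : Fin (d + 1)) (y : Fin d → ℝ) :
    rdot (avR i j) y = extCoord y i - extCoord y j := by
  rw [avR_eq, rdot_sub_left, rdot_coefR, rdot_coefR]

lemma avZ_unit {i j : Fin (d + 1)} (hij : i ≠ j) :
    ∃ vz : Fin d → ℤ, (∑ l, avZ i j l * vz l) = 1 := alcove_unit_vec hij

lemma rdot_avR_cast (i j : Fin (d + 1)) (q : Fin d → ℤ) :
    rdot (avR i j) (fun l => (q l : ℝ)) = ((∑ l, avZ i j l * q l : ℤ) : ℝ) := by
  rw [cast_sum_mul]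
  rfl

lemma avR_ne_zero {i j : Fin (d + 1)} (hij : i ≠ j) : avR i j ≠ 0 := by
  obtain ⟨vz, hvz⟩ := avZ_unit hij
  intro h
  have h2 : rdot (avR i j) (fun l => (vz l : ℝ)) = 1 := by
    rw [rdot_avR_cast, hvz]
    simp
  rw [h] at h2
  have h3 : rdot (0 : Fin d → ℝ) (fun l => (vz l : ℝ)) = 0 := by
    unfold rdot
    simp
  rw [h3] at h2
  exact one_ne_zero h2.symm

lemma avZ_swap (i j : Fin (d + 1)) : avZ j i = -avZ i j := by
  funext l
  simp [avZ]

lemma avR_swap (i j : Fin (d + 1)) : avR j i = -avR i j := by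
  funext l
  rw [show (-avR i j) l = -(avR i j l) from rfl]
  rw [avR, avR, avZ_swap]
  rw [show (-avZ i j) l = -(avZ i j l) from rfl]
  push_cast
  ring

/-- every valid facet-defining inequality of an alcoved polytope is a positive multiple
of an alcove inequality -/
lemma facet_alcove_data {P : Set (Fin d → ℝ)}
    (halc : ∀ F', IsFacet P F' → ∃ H, IsAlcoveHyperplane H ∧ F' ⊆ H)
    {a : Fin d → ℝ} {c : ℝ} (ha : a ≠ 0)
    (hval : ∀ y ∈ P, rdot a y ≤ c)
    (hne : {y ∈ P | rdot a y = c}.Nonempty)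
    (hrk : Module.finrank ℝ (affineSpan ℝ {y ∈ P | rdot a y = c}).direction = d - 1) :
    ∃ (i j : Fin (d + 1)) (k : ℤ) (lam : ℝ), i ≠ j ∧ 0 < lam ∧
      a = lam • avR i j ∧ c = lam * (k : ℝ) ∧
      ((affineSpan ℝ {y ∈ P | rdot a y = c} : AffineSubspace ℝ (Fin d → ℝ)) : Set (Fin d → ℝ))
        = {x | rdot (avR i j) x = (k : ℝ)} := by
  have hfacet : IsFacet P {y ∈ P | rdot a y = c} := ⟨a, c, ha, hval, rfl, hrk⟩
  obtain ⟨H, ⟨i, j, k, hij, rfl⟩, hFH⟩ := halc _ hfacet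
  have hHset : {y : Fin d → ℝ | extCoord y i - extCoord y j = (k : ℝ)} =
      {x | rdot (avR i j) x = (k : ℝ)} := by
    ext y
    rw [Set.mem_setOf_eq, Set.mem_setOf_eq, rdot_avR]
  have hsub2 : {y ∈ P | rdot a y = c} ⊆ {x | rdot (avR i j) x = (k : ℝ)} := by
    rw [← hHset]; exact hFH
  have hsub1 : {y ∈ P | rdot a y = c} ⊆ {x | rdot a x = c} := fun y hy => hy.2
  have hspan1 := affineSpan_face_eq ha hne hsub1 hrk
  have hspan2 := affineSpan_face_eq (avR_ne_zero hij) hne hsub2 hrk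
  have hseteq : {x : Fin d → ℝ | rdot a x = c} = {x | rdot (avR i j) x = (k : ℝ)} := by
    rw [← hspan1, hspan2]
  obtain ⟨lam, hlam0, haeq, hceq⟩ := hyperplane_eq_prop ha (avR_ne_zero hij) hseteq
  rcases hlam0.lt_or_gt with hneg | hpos
  · refine ⟨j, i, -k, -lam, Ne.symm hij, by linarith, ?_, ?_, ?_⟩
    · rw [haeq, avR_swap]
      funext l
      simp
    · rw [hceq]
      push_cast
      ring
    · rw [hspan2, hHset.symm, hHset]
      ext y
      rw [Set.mem_setOf_eq, Set.mem_setOf_eq, avR_swap, rdot_neg_left]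
      push_cast
      constructor <;> intro h <;> linarith
  · exact ⟨i, j, k, lam, hij, hpos, haeq, hceq, hspan2⟩

/-- an unbounded closed convex set has a recession direction at any of its points -/
lemma exists_recession {S : Set (Fin d → ℝ)} (hconv : Convex ℝ S) (hcl : IsClosed S)
    {x₀ : Fin d → ℝ} (hx₀ : x₀ ∈ S) (hub : ¬ Bornology.IsBounded S) :
    ∃ u : Fin d → ℝ, ‖u‖ = 1 ∧ ∀ t : ℝ, 0 ≤ t → x₀ + t • u ∈ S := by
  rw [isBounded_iff_forall_norm_le] at hub
  push_neg at hub
  have hseq : ∀ n : ℕ, ∃ x ∈ S, (n : ℝ) + ‖x₀‖ < ‖x‖ := fun n => hub ((n : ℝ) + ‖x₀‖)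
  choose xs hxsS hxsn using hseq
  have hpos : ∀ n : ℕ, (n : ℝ) < ‖xs n - x₀‖ := by
    intro n
    have h1 := norm_sub_norm_le (xs n) x₀
    have h2 := hxsn n
    linarith [abs_le.mp (le_refl |‖xs n‖ - ‖x₀‖|), le_abs_self (‖xs n‖ - ‖x₀‖)]
  have hpos' : ∀ n : ℕ, (0 : ℝ) < ‖xs n - x₀‖ := fun n =>
    lt_of_le_of_lt (Nat.cast_nonneg n) (hpos n)
  set u : ℕ → (Fin d → ℝ) := fun n => ‖xs n - x₀‖⁻¹ • (xs n - x₀) with hu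
  have hun : ∀ n, u n ∈ Metric.sphere (0 : Fin d → ℝ) 1 := by
    intro n
    simp only [Metric.mem_sphere, dist_zero_right, hu, norm_smul, norm_inv, norm_norm]
    exact inv_mul_cancel₀ (ne_of_gt (hpos' n))
  obtain ⟨a, haS, φ, hφ, hφt⟩ := (isCompact_sphere (0 : Fin d → ℝ) 1).tendsto_subseq hun
  have ha1 : ‖a‖ = 1 := by simpa using haS
  refine ⟨a, ha1, fun t ht => ?_⟩
  have hmem : ∀ n : ℕ, t ≤ ‖xs n - x₀‖ → x₀ + t • u n ∈ S := by
    intro n hn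
    set θ : ℝ := t / ‖xs n - x₀‖ with hθ
    have hθ0 : 0 ≤ θ := div_nonneg ht (norm_nonneg _)
    have hθ1 : θ ≤ 1 := by
      rw [hθ, div_le_one (hpos' n)]
      exact hn
    have hcomb := hconv hx₀ (hxsS n) (by linarith : (0:ℝ) ≤ 1 - θ) hθ0 (by ring)
    have heq : (1 - θ) • x₀ + θ • xs n = x₀ + t • u n := by
      rw [hu]
      have : t • ‖xs n - x₀‖⁻¹ • (xs n - x₀) = θ • (xs n - x₀) := by
        rw [smul_smul, hθ, div_eq_mul_inv]
      rw [smul_smul] at this ⊢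
      rw [this, smul_sub, sub_smul, one_smul]
      abel
    rwa [heq] at hcomb
  have htend : Filter.Tendsto (fun n => x₀ + t • u (φ n)) Filter.atTop (nhds (x₀ + t • a)) := by
    apply Filter.Tendsto.const_add
    exact (continuous_const_smul t).continuousAt.tendsto.comp hφt
  apply hcl.mem_of_tendsto htend
  rw [Filter.eventually_atTop]
  obtain ⟨N, hN⟩ := exists_nat_gt t
  refine ⟨N, fun n hn => ?_⟩
  apply hmem
  calc t ≤ (N : ℝ) := le_of_lt hN
    _ ≤ (φ n : ℝ) := by
        have h1 : n ≤ φ n := hφ.le_apply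
        have h2 : N ≤ φ n := le_trans hn h1
        exact_mod_cast h2
    _ ≤ ‖xs (φ n) - x₀‖ := le_of_lt (hpos (φ n))

/-- the integer rounding of a direction, compatible with all alcove inequalities -/
lemma round_direction {i j : Fin (d + 1)} (hij : i ≠ j) (u : Fin d → ℝ)
    (hu : 0 < rdot (avR i j) u) :
    ∃ w : Fin d → ℤ, (∑ l, avZ i j l * w l) = 1 ∧
      ∀ i' j' : Fin (d + 1), rdot (avR i' j') u ≤ 0 → (∑ l, avZ i' j' l * w l) ≤ 0 := by
  classical
  set φ : ℝ → ℤ := fun x => if extCoord u i ≤ x then 1 else 0 with hφ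
  have hφmono : ∀ x y : ℝ, x ≤ y → φ x ≤ φ y := by
    intro x y hxy
    show (if extCoord u i ≤ x then (1:ℤ) else 0) ≤ (if extCoord u i ≤ y then (1:ℤ) else 0)
    by_cases hx : extCoord u i ≤ x
    · rw [if_pos hx, if_pos (le_trans hx hxy)]
    · rw [if_neg hx]
      split <;> omega
  set w : Fin d → ℤ := fun l => φ (u l) - φ 0 with hw
  have hwext : ∀ m : Fin (d + 1), (∑ l, coefZ m l * w l) = φ (extCoord u m) - φ 0 := by
    intro m
    rcases Fin.eq_zero_or_eq_succ m with rfl | ⟨m', rfl⟩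
    · have : ∀ l : Fin d, coefZ (0 : Fin (d+1)) l = 0 := by
        intro l
        simp [coefZ, Ne.symm (Fin.succ_ne_zero l)]
      rw [Finset.sum_eq_zero (fun l _ => by rw [this l, zero_mul])]
      have h0 : extCoord u (0 : Fin (d+1)) = 0 := rfl
      rw [h0]
      ring
    · rw [Finset.sum_eq_single m']
      · have : coefZ (m'.succ) m' = 1 := by simp [coefZ]
        rw [this, one_mul, hw]
        have : extCoord u m'.succ = u m' := by simp [extCoord]
        rw [this]
      · intro l _ hl
        have : coefZ (m'.succ) l = 0 := by
          simp [coefZ, Fin.succ_inj]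
          intro hh; exact absurd hh (Ne.symm hl)
        rw [this, zero_mul]
      · simp
  have hkey : ∀ i' j' : Fin (d + 1), (∑ l, avZ i' j' l * w l) =
      φ (extCoord u i') - φ (extCoord u j') := by
    intro i' j'
    have : ∀ l, avZ i' j' l * w l = coefZ i' l * w l - coefZ j' l * w l := by
      intro l; simp [avZ]; ring
    rw [Finset.sum_congr rfl (fun l _ => this l), Finset.sum_sub_distrib, hwext, hwext]
    ring
  refine ⟨w, ?_, ?_⟩
  · rw [hkey]
    rw [rdot_avR] at hu
    have hij2 : extCoord u j < extCoord u i := by linarith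
    have h1 : φ (extCoord u i) = 1 := by
      show (if extCoord u i ≤ extCoord u i then (1:ℤ) else 0) = 1
      rw [if_pos le_rfl]
    have h2 : φ (extCoord u j) = 0 := by
      show (if extCoord u i ≤ extCoord u j then (1:ℤ) else 0) = 0
      rw [if_neg (by linarith)]
    rw [h1, h2]
    omega
  · intro i' j' hle
    rw [hkey]
    rw [rdot_avR] at hle
    have h3 := hφmono _ _ (show extCoord u i' ≤ extCoord u j' by linarith)
    omega

end Stmt13


namespace Stmt13

variable {d : ℕ}

lemma subset_removeFacetHalfspace (P F : Set (Fin d → ℝ)) : P ⊆ removeFacetHalfspace P F :=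
  fun x hx a c _ hval _ _ => hval x hx

lemma convex_removeFacetHalfspace (P F : Set (Fin d → ℝ)) :
    Convex ℝ (removeFacetHalfspace P F) := by
  intro x hx y hy α β hα hβ hαβ
  intro a c ha hval hfacet hne
  have h1 : rdot a x ≤ c := hx a c ha hval hfacet hne
  have h2 : rdot a y ≤ c := hy a c ha hval hfacet hne
  show rdot a (α • x + β • y) ≤ c
  rw [rdot_add, rdot_smul, rdot_smul]
  have hc : α * c + β * c = c := by rw [← add_mul, hαβ, one_mul]
  nlinarith [mul_le_mul_of_nonneg_left h1 hα, mul_le_mul_of_nonneg_left h2 hβ]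

lemma isClosed_removeFacetHalfspace (P F : Set (Fin d → ℝ)) :
    IsClosed (removeFacetHalfspace P F) := by
  have heq : removeFacetHalfspace P F = ⋂ (a : Fin d → ℝ), ⋂ (c : ℝ),
      ⋂ (_ : a ≠ 0 ∧ (∀ y ∈ P, (∑ i, a i * y i) ≤ c) ∧
        IsFacet P {y ∈ P | (∑ i, a i * y i) = c} ∧ {y ∈ P | (∑ i, a i * y i) = c} ≠ F),
      {x : Fin d → ℝ | (∑ i, a i * x i) ≤ c} := by
    ext x
    simp only [Set.mem_iInter, Set.mem_setOf_eq]
    constructor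
    · rintro h a c ⟨h1, h2, h3, h4⟩
      exact h a c h1 h2 h3 h4
    · intro h a c h1 h2 h3 h4
      exact h a c ⟨h1, h2, h3, h4⟩
  rw [heq]
  refine isClosed_iInter (fun a => isClosed_iInter (fun c => isClosed_iInter (fun _ => ?_)))
  exact isClosed_le (continuous_rdot a) continuous_const

end Stmt13


/-- Let `P` be a `d`-dimensional alcoved polytope with an interior
lattice point, `F` a facet of `P`, and `P'` the alcoved polyhedron obtained by removing
the facet-defining half-space of `F` from the half-space description of `P`. If `P'` is
unbounded, then `F` has lattice distance `1` to the set of interior lattice points. -/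
theorem stmt13 (d : ℕ) (P : Set (Fin d → ℝ)) (hP : IsAlcovedPolytope P)
    (hint : (interiorLatticePts P).Nonempty)
    (F : Set (Fin d → ℝ)) (hF : IsFacet P F)
    (hub : ¬ Bornology.IsBounded (removeFacetHalfspace P F)) :
    facetLatticeDistSet F (interiorLatticePts P) = 1 := by
  classical
  open Stmt13 in
  obtain ⟨hpoly, hful, halc⟩ := hP
  obtain ⟨q, hq⟩ := hint
  have hqint : (fun l => (q l : ℝ)) ∈ interior P := hq
  have hqP : (fun l => (q l : ℝ)) ∈ P := interior_subset hqint
  obtain ⟨V, hV⟩ := hpoly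
  obtain ⟨a₀, c₀, ha₀, hval₀, hFdef, hrkF⟩ := hF
  rcases Nat.lt_or_ge d 2 with hd | hd
  · -- degenerate dimensions: P' is in fact bounded
    exfalso
    interval_cases d
    · exact ha₀ (funext fun i => i.elim0)
    · -- d = 1
      apply hub
      have hPcomp : IsCompact P := by
        rw [hV]; exact (V.finite_toSet).isCompact_convexHull ℝ
      have hcont : ContinuousOn (fun y : Fin 1 → ℝ => y 0) P :=
        (continuous_apply 0).continuousOn
      have hcont' : ContinuousOn (fun y : Fin 1 → ℝ => -(y 0)) P :=
        ((continuous_apply 0).neg).continuousOn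
      obtain ⟨zM, hzMP, hzMmax⟩ := hPcomp.exists_isMaxOn ⟨_, hqP⟩ hcont
      obtain ⟨zm, hzmP, hzmmax⟩ := hPcomp.exists_isMaxOn ⟨_, hqP⟩ hcont'
      -- build an upper bound constraint kept in P'
      have hkey : ∀ (σ : ℝ), σ = 1 ∨ σ = -1 → ∀ (zb : Fin 1 → ℝ), zb ∈ P →
          (∀ y ∈ P, σ * y 0 ≤ σ * zb 0) →
          ∃ cU : ℝ, ∀ x ∈ removeFacetHalfspace P F, σ * x 0 ≤ cU := by
        intro σ hσ zb hzbP hzbmax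
        have hσ0 : σ ≠ 0 := by rcases hσ with rfl | rfl <;> norm_num
        have hsum : ∀ y : Fin 1 → ℝ, (∑ i, (fun _ : Fin 1 => σ) i * y i) = σ * y 0 := by
          intro y; rw [Fin.sum_univ_one]
        have haσ : (fun _ : Fin 1 => σ) ≠ 0 := by
          intro h; exact hσ0 (congrFun h 0)
        by_cases hFe : F = ∅
        · -- use the attained maximum; its facet is the singleton {zb}
          refine ⟨σ * zb 0, fun x hx => ?_⟩
          have hval : ∀ y ∈ P, (∑ i, (fun _ : Fin 1 => σ) i * y i) ≤ σ * zb 0 := by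
            intro y hy; rw [hsum]; exact hzbmax y hy
          have hGsing : {y ∈ P | (∑ i, (fun _ : Fin 1 => σ) i * y i) = σ * zb 0} = {zb} := by
            apply Set.eq_of_subset_of_subset
            · rintro y ⟨hyP, hyc⟩
              rw [hsum] at hyc
              have h1 : y 0 = zb 0 := by
                have := mul_left_cancel₀ hσ0 hyc
                exact this
              funext l
              have : l = 0 := Subsingleton.elim l 0
              rw [this, h1]
            · rintro y rfl
              exact ⟨hzbP, by rw [hsum]⟩
          have hfacet : IsFacet P {y ∈ P | (∑ i, (fun _ : Fin 1 => σ) i * y i) = σ * zb 0} := by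
            refine ⟨(fun _ : Fin 1 => σ), σ * zb 0, haσ, hval, rfl, ?_⟩
            rw [hGsing]
            rw [show affineSpan ℝ ({zb} : Set (Fin 1 → ℝ)) = affineSpan ℝ ({zb} : Set (Fin 1 → ℝ)) from rfl]
            rw [direction_affineSpan, vectorSpan_singleton]
            simp
          have hne : {y ∈ P | (∑ i, (fun _ : Fin 1 => σ) i * y i) = σ * zb 0} ≠ F := by
            rw [hGsing, hFe]
            intro h
            exact (Set.singleton_nonempty zb).ne_empty h
          have := hx _ _ haσ hval hfacet hne
          rw [hsum] at this
          exact this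
        · -- F nonempty: use an empty facet one unit beyond the maximum
          refine ⟨σ * zb 0 + 1, fun x hx => ?_⟩
          have hval : ∀ y ∈ P, (∑ i, (fun _ : Fin 1 => σ) i * y i) ≤ σ * zb 0 + 1 := by
            intro y hy; rw [hsum]; linarith [hzbmax y hy]
          have hGempty : {y ∈ P | (∑ i, (fun _ : Fin 1 => σ) i * y i) = σ * zb 0 + 1} = ∅ := by
            rw [Set.eq_empty_iff_forall_notMem]
            rintro y ⟨hyP, hyc⟩
            rw [hsum] at hyc
            linarith [hzbmax y hyP]
          have hfacet : IsFacet P {y ∈ P | (∑ i, (fun _ : Fin 1 => σ) i * y i) = σ * zb 0 + 1} := by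
            refine ⟨(fun _ : Fin 1 => σ), σ * zb 0 + 1, haσ, hval, rfl, ?_⟩
            rw [hGempty, AffineSubspace.span_empty, AffineSubspace.direction_bot]
            simp
          have hne : {y ∈ P | (∑ i, (fun _ : Fin 1 => σ) i * y i) = σ * zb 0 + 1} ≠ F := by
            rw [hGempty]
            intro h
            exact hFe h.symm
          have := hx _ _ haσ hval hfacet hne
          rw [hsum] at this
          exact this
      obtain ⟨cU, hcU⟩ := hkey 1 (Or.inl rfl) zM hzMP (fun y hy => by
        simpa using hzMmax hy)
      obtain ⟨cL, hcL⟩ := hkey (-1) (Or.inr rfl) zm hzmP (fun y hy => by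
        have := hzmmax hy
        simp only [neg_mul, one_mul] at this ⊢
        simpa using this)
      rw [isBounded_iff_forall_norm_le]
      refine ⟨|cU| + |cL|, fun x hx => ?_⟩
      have h1 := hcU x hx
      have h2 := hcL x hx
      rw [one_mul] at h1
      rw [neg_one_mul] at h2
      apply pi_norm_le_iff_of_nonneg (by positivity) |>.mpr
      intro l
      have : l = 0 := Subsingleton.elim l 0
      rw [this, Real.norm_eq_abs]
      rw [abs_le]
      constructor
      · linarith [le_abs_self cL, abs_nonneg cU]
      · linarith [le_abs_self cU, abs_nonneg cL]
  · -- main case : d ≥ 2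
    have hFne : F.Nonempty := by
      rcases Set.eq_empty_or_nonempty F with he | h
      · exfalso
        rw [he, AffineSubspace.span_empty, AffineSubspace.direction_bot, finrank_bot] at hrkF
        omega
      · exact h
    have hFdef' : F = {y ∈ P | rdot a₀ y = c₀} := hFdef
    have hval₀' : ∀ y ∈ P, rdot a₀ y ≤ c₀ := hval₀
    have hrkF' : Module.finrank ℝ (affineSpan ℝ {y ∈ P | rdot a₀ y = c₀}).direction = d - 1 := by
      rw [← hFdef']; exact hrkF
    have hFne' : {y ∈ P | rdot a₀ y = c₀}.Nonempty := hFdef' ▸ hFne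
    obtain ⟨i, j, k, lam, hij, hlam, haeq, hceq, hspan⟩ :=
      facet_alcove_data halc ha₀ hval₀' hFne' hrkF'
    have hPle : ∀ y ∈ P, rdot (avR i j) y ≤ (k : ℝ) := by
      intro y hy
      have h1 := hval₀' y hy
      rw [haeq, rdot_smul_left, hceq] at h1
      exact (mul_le_mul_iff_right₀ hlam).mp h1
    have haffF : ((affineSpan ℝ F : AffineSubspace ℝ (Fin d → ℝ)) : Set (Fin d → ℝ)) =
        {x | rdot (avR i j) x = (k : ℝ)} := by
      rw [hFdef']; exact hspan
    obtain ⟨vz, hvz⟩ := avZ_unit hij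
    -- the distance of each interior lattice point
    have hdistform : ∀ r ∈ interiorLatticePts P,
        hyperplaneLatticeDist
          ((affineSpan ℝ F : AffineSubspace ℝ (Fin d → ℝ)) : Set (Fin d → ℝ)) r =
          (k - ∑ l, avZ i j l * r l).toNat ∧ (∑ l, avZ i j l * r l) < k := by
      intro r hr
      have hrint : (fun l => (r l : ℝ)) ∈ interior P := hr
      have hlt : rdot (avR i j) (fun l => (r l : ℝ)) < (k : ℝ) :=
        lt_of_interior (avR_ne_zero hij) hPle hrint
      rw [rdot_avR_cast] at hlt
      have hltZ : (∑ l, avZ i j l * r l) < k := by exact_mod_cast hlt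
      refine ⟨?_, hltZ⟩
      rw [haffF]
      exact hyperplaneLatticeDist_eq vz hvz k r hltZ
    -- recession direction
    have hPP' : P ⊆ removeFacetHalfspace P F := subset_removeFacetHalfspace P F
    obtain ⟨u, hu1, hurec⟩ := exists_recession (convex_removeFacetHalfspace P F)
      (isClosed_removeFacetHalfspace P F) (hPP' hqP) hub
    have hconstr : ∀ (a : Fin d → ℝ) (c : ℝ), a ≠ 0 → (∀ y ∈ P, (∑ i, a i * y i) ≤ c) →
        IsFacet P {y ∈ P | (∑ i, a i * y i) = c} → {y ∈ P | (∑ i, a i * y i) = c} ≠ F →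
        rdot a u ≤ 0 := by
      intro a c h1 h2 h3 h4
      by_contra hpos
      push_neg at hpos
      have hcge : rdot a (fun l => (q l : ℝ)) ≤ c := h2 _ hqP
      have htpos : (0:ℝ) ≤ (c - rdot a (fun l => (q l : ℝ)) + 1) / rdot a u := by
        apply div_nonneg (by linarith) (le_of_lt hpos)
      have hmem := hurec _ htpos
      have h5 : rdot a ((fun l => (q l : ℝ)) +
          ((c - rdot a (fun l => (q l : ℝ)) + 1) / rdot a u) • u) ≤ c :=
        hmem a c h1 h2 h3 h4
      rw [rdot_add, rdot_smul, div_mul_cancel₀ _ (ne_of_gt hpos)] at h5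
      linarith
    -- facets suffice : P = P' ∩ {rdot ≤ k}
    have hincl : ∀ x, x ∈ removeFacetHalfspace P F → rdot (avR i j) x ≤ (k : ℝ) → x ∈ P := by
      intro x hx hxk
      by_contra hxP
      obtain ⟨a, c, ha, hvalP, hGne, hGrk, hviol⟩ :=
        facets_suffice V P hV ⟨_, hqint⟩ hxP
      by_cases hGF : {y ∈ P | rdot a y = c} = F
      · have hspanG := affineSpan_face_eq ha hGne (fun y hy => hy.2) hGrk
        have hHeq : {x | rdot a x = c} = {x | rdot (avR i j) x = (k : ℝ)} := by
          rw [← hspanG, hGF, haffF]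
        obtain ⟨mu, hmu0, hmua, hmuc⟩ := hyperplane_eq_prop ha (avR_ne_zero hij) hHeq
        rcases hmu0.lt_or_gt with hneg | hpos
        · have hall : P ⊆ {x | rdot (avR i j) x = (k : ℝ)} := by
            intro y hy
            have h5 := hvalP y hy
            rw [hmua, rdot_smul_left, hmuc] at h5
            have h6 : (k : ℝ) ≤ rdot (avR i j) y := by nlinarith
            exact le_antisymm (hPle y hy) h6
          have h7 := interior_mono hall hqint
          rw [interior_hyperplane_empty (avR_ne_zero hij) _] at h7
          exact h7
        · have h8 : rdot a x = mu * rdot (avR i j) x := by rw [hmua, rdot_smul_left]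
          rw [hmuc] at hviol
          nlinarith
      · have hG : IsFacet P {y ∈ P | rdot a y = c} := ⟨a, c, ha, hvalP, rfl, hGrk⟩
        have h8 : rdot a x ≤ c := hx a c ha hvalP hG hGF
        linarith
    -- the direction leaves through F
    have hupos : 0 < rdot (avR i j) u := by
      by_contra hle
      push_neg at hle
      have hray : ∀ t : ℝ, 0 ≤ t → (fun l => (q l : ℝ)) + t • u ∈ P := by
        intro t ht
        apply hincl _ (hurec t ht)
        rw [rdot_add, rdot_smul]
        have h9 := hPle _ hqP
        nlinarith
      have hbd : Bornology.IsBounded P := by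
        rw [hV]; exact isBounded_convexHull.mpr V.finite_toSet.isBounded
      rw [isBounded_iff_forall_norm_le] at hbd
      obtain ⟨C, hC⟩ := hbd
      have hC0 : 0 ≤ C := le_trans (norm_nonneg _) (hC _ hqP)
      set qn := ‖(fun l => (q l : ℝ) : Fin d → ℝ)‖ with hqn
      have h10 := hC _ (hray (C + qn + 1) (by positivity))
      have h11 := norm_sub_le ((fun l => (q l : ℝ)) + (C + qn + 1) • u) (fun l => (q l : ℝ))
      rw [add_sub_cancel_left, norm_smul, hu1, mul_one, Real.norm_eq_abs,
        abs_of_pos (by positivity)] at h11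
      linarith
    -- round the direction to a lattice direction
    obtain ⟨w, hw1, hwmono⟩ := round_direction hij u hupos
    have hwrec : ∀ (a : Fin d → ℝ) (c : ℝ), a ≠ 0 → (∀ y ∈ P, (∑ i, a i * y i) ≤ c) →
        IsFacet P {y ∈ P | (∑ i, a i * y i) = c} → {y ∈ P | (∑ i, a i * y i) = c} ≠ F →
        rdot a (fun l => (w l : ℝ)) ≤ 0 := by
      intro a c h1 h2 h3 h4
      obtain ⟨a2, c2, _, _, _, hrk2⟩ := h3
      have hGne : {y ∈ P | rdot a y = c}.Nonempty := by
        rcases Set.eq_empty_or_nonempty {y ∈ P | (∑ i, a i * y i) = c} with he | hne2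
        · exfalso
          rw [he, AffineSubspace.span_empty, AffineSubspace.direction_bot, finrank_bot] at hrk2
          omega
        · exact hne2
      obtain ⟨i', j', k', lam', hij', hlam', haeq', _, _⟩ :=
        facet_alcove_data halc h1 h2 hGne hrk2
      have hau : rdot a u ≤ 0 := hconstr a c h1 h2 ⟨a, c, h1, h2, rfl, hrk2⟩ h4
      rw [haeq', rdot_smul_left] at hau
      have hru : rdot (avR i' j') u ≤ 0 := by
        by_contra hc
        push_neg at hc
        nlinarith
      have hz := hwmono i' j' hru
      have hcast : rdot (avR i' j') (fun l => (w l : ℝ)) =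
          ((∑ l, avZ i' j' l * w l : ℤ) : ℝ) := rdot_avR_cast i' j' w
      rw [haeq', rdot_smul_left, hcast]
      have : ((∑ l, avZ i' j' l * w l : ℤ) : ℝ) ≤ 0 := by exact_mod_cast hz
      nlinarith
    have hP'rec : ∀ x ∈ removeFacetHalfspace P F, ∀ t : ℝ, 0 ≤ t →
        x + t • (fun l => (w l : ℝ)) ∈ removeFacetHalfspace P F := by
      intro x hx t ht a c h1 h2 h3 h4
      have h5 : rdot a x ≤ c := hx a c h1 h2 h3 h4
      have h6 := hwrec a c h1 h2 h3 h4
      show rdot a (x + t • _) ≤ c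
      rw [rdot_add, rdot_smul]
      nlinarith
    -- construct the lattice point at distance 1
    have hsqlt : (∑ l, avZ i j l * q l) < k := (hdistform q hq).2
    have hΔ0 : (0:ℤ) ≤ k - 1 - (∑ l, avZ i j l * q l) := by omega
    have hpcast : (fun l => ((q l + (k - 1 - (∑ l', avZ i j l' * q l')) * w l : ℤ) : ℝ)) =
        (fun l => (q l : ℝ)) +
          ((k - 1 - (∑ l', avZ i j l' * q l') : ℤ) : ℝ) • (fun l => (w l : ℝ)) := by
      funext l
      push_cast
      simp
    have hpsum : (∑ l, avZ i j l * (q l + (k - 1 - (∑ l', avZ i j l' * q l')) * w l)) =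
        k - 1 := by
      have hexp : ∀ l, avZ i j l * (q l + (k - 1 - (∑ l', avZ i j l' * q l')) * w l) =
          avZ i j l * q l + (k - 1 - (∑ l', avZ i j l' * q l')) * (avZ i j l * w l) := by
        intro l; ring
      rw [Finset.sum_congr rfl (fun l _ => hexp l), Finset.sum_add_distrib,
        ← Finset.mul_sum, hw1, mul_one]
      ring
    have hpint : (fun l => ((q l + (k - 1 - (∑ l', avZ i j l' * q l')) * w l : ℤ) : ℝ))
        ∈ interior P := by
      have hopen : IsOpen (interior (removeFacetHalfspace P F) ∩
          {x | rdot (avR i j) x < (k : ℝ)}) :=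
        isOpen_interior.inter (isOpen_lt (continuous_rdot _) continuous_const)
      have hsubP : interior (removeFacetHalfspace P F) ∩
          {x | rdot (avR i j) x < (k : ℝ)} ⊆ P := by
        rintro x ⟨hx1, hx2⟩
        exact hincl x (interior_subset hx1) (le_of_lt hx2)
      apply interior_maximal hsubP hopen
      constructor
      · -- interior of P'
        have hqint' : (fun l => (q l : ℝ)) ∈ interior (removeFacetHalfspace P F) :=
          interior_mono hPP' hqint
        obtain ⟨ε, hε, hball⟩ := Metric.isOpen_iff.mp isOpen_interior _ hqint'
        apply mem_interior.mpr
        refine ⟨Metric.ball _ ε, ?_, Metric.isOpen_ball, Metric.mem_ball_self hε⟩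
        intro y hy
        have h7 : y - ((k - 1 - (∑ l', avZ i j l' * q l') : ℤ) : ℝ) • (fun l => (w l : ℝ))
            ∈ Metric.ball (fun l => (q l : ℝ)) ε := by
          rw [Metric.mem_ball, dist_eq_norm] at hy ⊢
          have heq2 : y - ((k - 1 - (∑ l', avZ i j l' * q l') : ℤ) : ℝ) • (fun l => (w l : ℝ))
              - (fun l => (q l : ℝ)) =
              y - (fun l => ((q l + (k - 1 - (∑ l', avZ i j l' * q l')) * w l : ℤ) : ℝ)) := by
            rw [hpcast]; abel
          rw [heq2]
          exact hy
        have h8 := interior_subset (hball h7)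
        have h9 := hP'rec _ h8 _ (by exact_mod_cast hΔ0 :
          (0:ℝ) ≤ ((k - 1 - (∑ l', avZ i j l' * q l') : ℤ) : ℝ))
        have heq3 : y - ((k - 1 - (∑ l', avZ i j l' * q l') : ℤ) : ℝ) • (fun l => (w l : ℝ))
            + ((k - 1 - (∑ l', avZ i j l' * q l') : ℤ) : ℝ) • (fun l => (w l : ℝ)) = y := by
          abel
        rwa [heq3] at h9
      · show rdot (avR i j) _ < (k : ℝ)
        rw [rdot_avR_cast, hpsum]
        push_cast
        linarith
    -- finish : compute the infimum
    have hpILP : (fun l => q l + (k - 1 - (∑ l', avZ i j l' * q l')) * w l)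
        ∈ interiorLatticePts P := hpint
    have hpdist := (hdistform _ hpILP).1
    rw [hpsum] at hpdist
    have hone : (1:ℕ) ∈ {n : ℕ | ∃ r ∈ interiorLatticePts P, hyperplaneLatticeDist
        ((affineSpan ℝ F : AffineSubspace ℝ (Fin d → ℝ)) : Set (Fin d → ℝ)) r = n} := by
      refine ⟨_, hpILP, ?_⟩
      rw [hpdist]
      omega
    unfold facetLatticeDistSet
    apply le_antisymm
    · exact Nat.sInf_le hone
    · have hmem := Nat.sInf_mem (⟨1, hone⟩ : Set.Nonempty _)
      obtain ⟨r, hr, hrval⟩ := hmem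
      obtain ⟨hval, hlt⟩ := hdistform r hr
      rw [← hrval, hval]
      omega
end
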